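/- arXiv:1805.07849 — 6 statements merged into one kernel-verified Lean document; each statement's English description precedes it below -/
import Mathlib

section
/- Let (X_i, Y_i), i = 1, 2, ..., be independent and identically distributed pairs of real-valued random variables on a probability space, with E|X_1| < ∞. Define G_n(t) = (1/n) Σ_{i=1}^n X_i · 1_{Y_i ≤ t} and G(t) = E[X_1 · 1_{Y_1 ≤ t}]. Then sup_{t ∈ ℝ} |G_n(t) − G(t)| → 0 almost surely as n → ∞. -/
open MeasureTheory ProbabilityTheory Filter
open Finset Topology


noncomputable def wgcGridPt (F : ℝ → ℝ) (ε : ℝ) (j : ℕ) : ℝ :=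
  sInf {t | (j : ℝ) * ε ≤ F t}

lemma wgc_det (F Fm Fn Fnm : ℝ → ℝ) (Sn L ε : ℝ) (hε : 0 < ε)
    (hFmono : Monotone F) (hF0 : ∀ t, 0 ≤ F t) (hFL : ∀ t, F t ≤ L)
    (hFbot : ∀ δ, 0 < δ → ∃ t₀ : ℝ, ∀ t ≤ t₀, F t ≤ δ)
    (hFtop : ∀ δ, 0 < δ → ∃ t : ℝ, L - δ ≤ F t)
    (hrc : ∀ t c, (∀ s, t < s → c ≤ F s) → c ≤ F t)
    (hFmub : ∀ s t, s < t → F s ≤ Fm t)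
    (hFmlub : ∀ t c, (∀ s, s < t → F s ≤ c) → Fm t ≤ c)
    (hFnmono : Monotone Fn) (hFn0 : ∀ t, 0 ≤ Fn t) (hFnS : ∀ t, Fn t ≤ Sn)
    (hFnm : ∀ s t, s < t → Fn s ≤ Fnm t)
    (hconv : ∀ j, 1 ≤ j → j ≤ ⌈L / ε⌉₊ - 1 →
      |Fn (wgcGridPt F ε j) - F (wgcGridPt F ε j)| ≤ ε ∧
        |Fnm (wgcGridPt F ε j) - Fm (wgcGridPt F ε j)| ≤ ε)
    (hS : |Sn - L| ≤ ε) :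
    ∀ t, |Fn t - F t| ≤ 2 * ε := by
  have hSL := abs_le.1 hS
  have hL0 : 0 ≤ L := le_trans (hF0 0) (hFL 0)
  set K := ⌈L / ε⌉₊ with hK
  by_cases hK1 : K ≤ 1
  · have hLε : L ≤ ε := by
      have h1 : L / ε ≤ (1 : ℕ) := Nat.ceil_le.1 hK1
      rw [div_le_iff₀ hε] at h1
      simpa using h1
    intro t
    have h1 : F t ≤ ε := (hFL t).trans hLε
    have h2 : Fn t ≤ 2 * ε := (hFnS t).trans (by linarith [hSL.2])
    rw [abs_le]
    constructor <;> [linarith [hFn0 t] ; linarith [hF0 t]]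
  push_neg at hK1
  have hK2 : 2 ≤ K := hK1
  have hKL : L ≤ (K : ℝ) * ε := by
    have := Nat.le_ceil (L / ε)
    rw [div_le_iff₀ hε] at this
    exact this
  have hcast : ((K - 1 : ℕ) : ℝ) = (K : ℝ) - 1 := by
    have : (1:ℕ) ≤ K := by omega
    push_cast [Nat.cast_sub this]; ring
  -- j * ε < L for 1 ≤ j ≤ K - 1
  have hjL : ∀ j : ℕ, j ≤ K - 1 → (j : ℝ) * ε < L := by
    intro j hj
    have h1 : ¬ (L / ε ≤ ((K - 1 : ℕ) : ℝ)) := by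
      intro h
      have := Nat.ceil_le.2 h
      omega
    push_neg at h1
    have h2 : (j : ℝ) ≤ ((K - 1 : ℕ) : ℝ) := by exact_mod_cast hj
    calc (j : ℝ) * ε ≤ ((K - 1 : ℕ) : ℝ) * ε := by nlinarith
      _ < L := by rwa [← lt_div_iff₀ hε]
  have hSne : ∀ j : ℕ, j ≤ K - 1 → {t | (j : ℝ) * ε ≤ F t}.Nonempty := by
    intro j hj
    obtain ⟨t, ht⟩ := hFtop (L - (j : ℝ) * ε) (by linarith [hjL j hj])
    exact ⟨t, by simpa using by linarith⟩
  have hSbd : ∀ j : ℕ, 1 ≤ j → BddBelow {t | (j : ℝ) * ε ≤ F t} := by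
    intro j hj
    obtain ⟨t₀, ht₀⟩ := hFbot (ε / 2) (by linarith)
    refine ⟨t₀, fun t ht => ?_⟩
    by_contra hlt
    push_neg at hlt
    have h1 : F t ≤ ε / 2 := ht₀ t hlt.le
    have h2 : (j : ℝ) * ε ≤ F t := ht
    have h3 : (1 : ℝ) ≤ (j : ℝ) := by exact_mod_cast hj
    nlinarith
  have hd_lb : ∀ j : ℕ, 1 ≤ j → ∀ s, s < wgcGridPt F ε j → F s < (j : ℝ) * ε := by
    intro j hj s hs
    by_contra h
    push_neg at h
    have : wgcGridPt F ε j ≤ s := csInf_le (hSbd j hj) h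
    linarith
  have hd_ge : ∀ j : ℕ, 1 ≤ j → j ≤ K - 1 → (j : ℝ) * ε ≤ F (wgcGridPt F ε j) := by
    intro j hj hjK
    refine hrc _ _ fun s hs => ?_
    obtain ⟨u, hu, hus⟩ := exists_lt_of_csInf_lt (hSne j hjK) hs
    exact le_trans hu (hFmono hus.le)
  have hFm_le : ∀ j : ℕ, 1 ≤ j → Fm (wgcGridPt F ε j) ≤ (j : ℝ) * ε := by
    intro j hj
    exact hFmlub _ _ fun s hs => (hd_lb j hj s hs).le
  intro t
  classical
  set A := (Finset.Icc 1 (K - 1)).filter (fun j => wgcGridPt F ε j ≤ t) with hA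
  by_cases hAe : A.Nonempty
  · obtain ⟨j, hjmem, hjmax⟩ : ∃ j ∈ A, ∀ k ∈ A, k ≤ j :=
      ⟨A.max' hAe, A.max'_mem hAe, fun k hk => A.le_max' k hk⟩
    rw [hA, Finset.mem_filter, Finset.mem_Icc] at hjmem
    obtain ⟨⟨hj1, hjK⟩, hjt⟩ := hjmem
    have hcj := hconv j hj1 hjK
    have hFdj : (j : ℝ) * ε ≤ F (wgcGridPt F ε j) := hd_ge j hj1 hjK
    have hFt_ge : F (wgcGridPt F ε j) ≤ F t := hFmono hjt
    have hFnt_ge : Fn (wgcGridPt F ε j) ≤ Fn t := hFnmono hjt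
    have habsj := abs_le.1 hcj.1
    by_cases hjtop : j = K - 1
    · -- case C : t ≥ d (K-1)
      have hjε : (K : ℝ) * ε - ε ≤ F (wgcGridPt F ε j) := by
        rw [hjtop] at hFdj ⊢
        calc (K:ℝ) * ε - ε = ((K - 1 : ℕ) : ℝ) * ε := by rw [hcast]; ring
          _ ≤ _ := hFdj
      rw [abs_le]
      constructor
      · -- -(2ε) ≤ Fn t - F t : F t ≤ L, Fn t ≥ Fn dj ≥ F dj - ε ≥ Kε - 2ε ≥ L - 2ε
        have h1 : F (wgcGridPt F ε j) - ε ≤ Fn (wgcGridPt F ε j) := by linarith [habsj.1]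
        have h2 : F t ≤ L := hFL t
        linarith
      · have h1 : Fn t ≤ Sn := hFnS t
        linarith [hSL.2]
    · -- case B : d j ≤ t < d (j+1), j+1 ≤ K-1
      have hj1K : j + 1 ≤ K - 1 := by
        rcases Nat.lt_or_ge (j+1) K with h | h
        · omega
        · omega
      have hnt : ¬ wgcGridPt F ε (j + 1) ≤ t := by
        intro h
        have hmem : j + 1 ∈ A := by
          rw [hA, Finset.mem_filter, Finset.mem_Icc]
          exact ⟨⟨by omega, hj1K⟩, h⟩
        have := hjmax _ hmem
        omega
      push_neg at hnt
      have hcj1 := hconv (j + 1) (by omega) hj1K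
      have habsj1 := abs_le.1 hcj1.2
      have hFmj1 : Fm (wgcGridPt F ε (j + 1)) ≤ ((j : ℝ) + 1) * ε := by
        have := hFm_le (j + 1) (by omega)
        push_cast at this
        linarith
      rw [abs_le]
      constructor
      · -- F t - Fn t ≤ 2ε : F t ≤ Fm d(j+1) ≤ (j+1)ε ; Fn t ≥ Fn dj ≥ F dj - ε ≥ jε - ε
        have h1 : F t ≤ Fm (wgcGridPt F ε (j + 1)) := hFmub t _ hnt
        have h2 : F (wgcGridPt F ε j) - ε ≤ Fn (wgcGridPt F ε j) := by linarith [habsj.1]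
        linarith
      · -- Fn t - F t ≤ 2ε : Fn t ≤ Fnm d(j+1) ≤ Fm d(j+1) + ε ≤ (j+1)ε + ε ; F t ≥ jε
        have h1 : Fn t ≤ Fnm (wgcGridPt F ε (j + 1)) := hFnm t _ hnt
        linarith [habsj1.2]
  · -- case A : t < d 1
    have hnt : ¬ wgcGridPt F ε 1 ≤ t := by
      intro h
      exact hAe ⟨1, by rw [hA, Finset.mem_filter, Finset.mem_Icc]; exact ⟨⟨le_refl 1, by omega⟩, h⟩⟩
    push_neg at hnt
    have hFt : F t ≤ ε := by
      have := hd_lb 1 le_rfl t hnt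
      simpa using this.le
    have hc1 := hconv 1 le_rfl (by omega)
    have habs1 := abs_le.1 hc1.2
    have hFm1 : Fm (wgcGridPt F ε 1) ≤ ε := by simpa using hFm_le 1 le_rfl
    have hFnt : Fn t ≤ 2 * ε := by
      have h1 : Fn t ≤ Fnm (wgcGridPt F ε 1) := hFnm t _ hnt
      linarith [habs1.2]
    rw [abs_le]
    constructor
    · linarith [hFn0 t]
    · linarith [hF0 t]



lemma wgc_slln {Ω : Type*} [MeasurableSpace Ω] (μ : Measure Ω) [IsProbabilityMeasure μ]
    (X Y : ℕ → Ω → ℝ)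
    (hmeas : ∀ i, Measurable (fun ω => (X i ω, Y i ω)))
    (hindep : iIndepFun (fun i ω => (X i ω, Y i ω)) μ)
    (hident : ∀ i, IdentDistrib (fun ω => (X i ω, Y i ω)) (fun ω => (X 0 ω, Y 0 ω)) μ μ)
    (hint : Integrable (X 0) μ)
    (g : ℝ × ℝ → ℝ) (hg : Measurable g) (hbd : ∀ p : ℝ × ℝ, |g p| ≤ |p.1|) :
    ∀ᵐ ω ∂μ, Tendsto (fun n : ℕ => (1 / (n : ℝ)) * ∑ i ∈ range n, g (X i ω, Y i ω))
      atTop (𝓝 (∫ ω', g (X 0 ω', Y 0 ω') ∂μ)) := by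
  set Z : ℕ → Ω → ℝ := fun i ω => g (X i ω, Y i ω) with hZ
  have hZmeas : ∀ i, Measurable (Z i) := fun i => hg.comp (hmeas i)
  have hZint : Integrable (Z 0) μ := by
    refine hint.mono (hZmeas 0).aestronglyMeasurable (ae_of_all _ fun ω => ?_)
    simpa [Real.norm_eq_abs] using hbd (X 0 ω, Y 0 ω)
  have hZindep : Pairwise (Function.onFun (IndepFun · · μ) Z) := fun i j hij =>
    (hindep.indepFun hij).comp hg hg
  have hZident : ∀ i, IdentDistrib (Z i) (Z 0) μ μ := fun i => (hident i).comp hg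
  filter_upwards [strong_law_ae_real Z hZint hZindep hZident] with ω hω
  convert hω using 2 with n
  rw [one_div, inv_mul_eq_div]

lemma wgc_pos {Ω : Type*} [MeasurableSpace Ω] (μ : Measure Ω) [IsProbabilityMeasure μ]
    (X Y : ℕ → Ω → ℝ)
    (hmeas : ∀ i, Measurable (fun ω => (X i ω, Y i ω)))
    (hindep : iIndepFun (fun i ω => (X i ω, Y i ω)) μ)
    (hident : ∀ i, IdentDistrib (fun ω => (X i ω, Y i ω)) (fun ω => (X 0 ω, Y 0 ω)) μ μ)
    (hint : Integrable (X 0) μ)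
    (hpos : ∀ i ω, 0 ≤ X i ω) (ε : ℝ) (hε : 0 < ε) :
    ∀ᵐ ω ∂μ, ∀ᶠ n : ℕ in atTop, ∀ t : ℝ,
      |(1 / (n : ℝ)) * ∑ i ∈ range n, (if Y i ω ≤ t then X i ω else 0)
        - ∫ ω', (if Y 0 ω' ≤ t then X 0 ω' else 0) ∂μ| ≤ 2 * ε := by
  classical
  set F : ℝ → ℝ := fun t => ∫ ω', (if Y 0 ω' ≤ t then X 0 ω' else 0) ∂μ with hF
  set Fm : ℝ → ℝ := fun t => ∫ ω', (if Y 0 ω' < t then X 0 ω' else 0) ∂μ with hFm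
  set L : ℝ := ∫ ω', X 0 ω' ∂μ with hL
  -- measurability and integrability
  have hmle : ∀ t : ℝ, Measurable (fun ω' => if Y 0 ω' ≤ t then X 0 ω' else 0) := by
    intro t
    exact Measurable.ite (measurableSet_le (measurable_snd.comp (hmeas 0)) measurable_const)
      (measurable_fst.comp (hmeas 0)) measurable_const
  have hmlt : ∀ t : ℝ, Measurable (fun ω' => if Y 0 ω' < t then X 0 ω' else 0) := by
    intro t
    exact Measurable.ite (measurableSet_lt (measurable_snd.comp (hmeas 0)) measurable_const)
      (measurable_fst.comp (hmeas 0)) measurable_const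
  have hintle : ∀ t : ℝ, Integrable (fun ω' => if Y 0 ω' ≤ t then X 0 ω' else 0) μ := by
    intro t
    refine hint.mono (hmle t).aestronglyMeasurable (ae_of_all _ fun ω' => ?_)
    simp only [Real.norm_eq_abs]
    split_ifs <;> simp [abs_nonneg]
  have hintlt : ∀ t : ℝ, Integrable (fun ω' => if Y 0 ω' < t then X 0 ω' else 0) μ := by
    intro t
    refine hint.mono (hmlt t).aestronglyMeasurable (ae_of_all _ fun ω' => ?_)
    simp only [Real.norm_eq_abs]
    split_ifs <;> simp [abs_nonneg]
  -- analytic properties of F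
  have hFmono : Monotone F := by
    intro s t hst
    refine integral_mono (hintle s) (hintle t) fun ω' => ?_
    dsimp only
    split_ifs with h1 h2
    exacts [le_rfl, absurd (h1.trans hst) h2, hpos 0 ω', le_rfl]
  have hF0 : ∀ t, 0 ≤ F t := by
    intro t
    refine integral_nonneg fun ω' => ?_
    dsimp only
    split_ifs
    exacts [hpos 0 ω', le_rfl]
  have hFL : ∀ t, F t ≤ L := by
    intro t
    refine integral_mono (hintle t) hint fun ω' => ?_
    dsimp only
    split_ifs
    exacts [le_rfl, hpos 0 ω']
  have hFbotseq : Tendsto (fun n : ℕ => F (-(n : ℝ))) atTop (𝓝 0) := by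
    have key : Tendsto (fun n : ℕ => F (-(n : ℝ))) atTop (𝓝 (∫ _ω' : Ω, (0:ℝ) ∂μ)) := by
      rw [hF]
      refine tendsto_integral_of_dominated_convergence (fun ω' => |X 0 ω'|)
        (fun n => (hmle _).aestronglyMeasurable) hint.abs
        (fun n => ae_of_all _ fun ω' => ?_) (ae_of_all _ fun ω' => ?_)
      · simp only [Real.norm_eq_abs]
        split_ifs <;> simp [abs_nonneg]
      · obtain ⟨N, hN⟩ := exists_nat_gt (-(Y 0 ω'))
        refine Tendsto.congr' ?_ tendsto_const_nhds
        filter_upwards [eventually_ge_atTop N] with n hn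
        rw [eq_comm, if_neg]
        push_neg
        have : (N : ℝ) ≤ (n : ℝ) := by exact_mod_cast hn
        linarith
    simpa using key
  have hFbot : ∀ δ : ℝ, 0 < δ → ∃ t₀ : ℝ, ∀ t ≤ t₀, F t ≤ δ := by
    intro δ hδ
    obtain ⟨N, hN⟩ := (hFbotseq.eventually_lt_const hδ).exists
    exact ⟨-(N : ℝ), fun t ht => (hFmono ht).trans hN.le⟩
  have hFtopseq : Tendsto (fun n : ℕ => F ((n : ℝ))) atTop (𝓝 L) := by
    rw [hF, hL]
    refine tendsto_integral_of_dominated_convergence (fun ω' => |X 0 ω'|)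
      (fun n => (hmle _).aestronglyMeasurable) hint.abs
      (fun n => ae_of_all _ fun ω' => ?_) (ae_of_all _ fun ω' => ?_)
    · simp only [Real.norm_eq_abs]
      split_ifs <;> simp [abs_nonneg]
    · obtain ⟨N, hN⟩ := exists_nat_gt (Y 0 ω')
      refine Tendsto.congr' ?_ tendsto_const_nhds
      filter_upwards [eventually_ge_atTop N] with n hn
      rw [eq_comm, if_pos]
      have : (N : ℝ) ≤ (n : ℝ) := by exact_mod_cast hn
      linarith
  have hFtop : ∀ δ : ℝ, 0 < δ → ∃ t : ℝ, L - δ ≤ F t := by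
    intro δ hδ
    obtain ⟨N, hN⟩ := (hFtopseq.eventually_const_lt (by linarith : L - δ < L)).exists
    exact ⟨(N : ℝ), hN.le⟩
  have hrcseq : ∀ t : ℝ, Tendsto (fun n : ℕ => F (t + 1 / ((n : ℝ) + 1))) atTop (𝓝 (F t)) := by
    intro t
    rw [hF]
    refine tendsto_integral_of_dominated_convergence (fun ω' => |X 0 ω'|)
      (fun n => (hmle _).aestronglyMeasurable) hint.abs
      (fun n => ae_of_all _ fun ω' => ?_) (ae_of_all _ fun ω' => ?_)
    · simp only [Real.norm_eq_abs]
      split_ifs <;> simp [abs_nonneg]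
    · by_cases hy : Y 0 ω' ≤ t
      · have heq : (fun n : ℕ => if Y 0 ω' ≤ t + 1 / ((n : ℝ) + 1) then X 0 ω' else 0)
            = fun _ => X 0 ω' := by
          funext n
          rw [if_pos (hy.trans (le_add_of_nonneg_right (by positivity)))]
        rw [heq, if_pos hy]
        exact tendsto_const_nhds
      · rw [if_neg hy]
        push_neg at hy
        obtain ⟨N, hN⟩ := exists_nat_one_div_lt (sub_pos.2 hy)
        refine Tendsto.congr' ?_ tendsto_const_nhds
        filter_upwards [eventually_ge_atTop N] with n hn
        rw [eq_comm, if_neg]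
        push_neg
        have h2 : 1 / ((n : ℝ) + 1) ≤ 1 / ((N : ℝ) + 1) := by
          apply one_div_le_one_div_of_le
          · positivity
          · have : (N : ℝ) ≤ (n : ℝ) := by exact_mod_cast hn
            linarith
        linarith
  have hrc : ∀ t c : ℝ, (∀ s, t < s → c ≤ F s) → c ≤ F t := by
    intro t c hc
    refine ge_of_tendsto' (hrcseq t) fun n => hc _ ?_
    have : (0:ℝ) < 1 / ((n : ℝ) + 1) := by positivity
    linarith
  have hFmub : ∀ s t : ℝ, s < t → F s ≤ Fm t := by
    intro s t hst
    refine integral_mono (hintle s) (hintlt t) fun ω' => ?_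
    dsimp only
    split_ifs with h1 h2
    exacts [le_rfl, absurd (h1.trans_lt hst) h2, hpos 0 ω', le_rfl]
  have hFmseq : ∀ t : ℝ, Tendsto (fun n : ℕ => F (t - 1 / ((n : ℝ) + 1))) atTop (𝓝 (Fm t)) := by
    intro t
    rw [hF, hFm]
    refine tendsto_integral_of_dominated_convergence (fun ω' => |X 0 ω'|)
      (fun n => (hmle _).aestronglyMeasurable) hint.abs
      (fun n => ae_of_all _ fun ω' => ?_) (ae_of_all _ fun ω' => ?_)
    · simp only [Real.norm_eq_abs]
      split_ifs <;> simp [abs_nonneg]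
    · by_cases hy : Y 0 ω' < t
      · rw [if_pos hy]
        obtain ⟨N, hN⟩ := exists_nat_one_div_lt (sub_pos.2 hy)
        refine Tendsto.congr' ?_ tendsto_const_nhds
        filter_upwards [eventually_ge_atTop N] with n hn
        rw [eq_comm, if_pos]
        have h2 : 1 / ((n : ℝ) + 1) ≤ 1 / ((N : ℝ) + 1) := by
          apply one_div_le_one_div_of_le
          · positivity
          · have : (N : ℝ) ≤ (n : ℝ) := by exact_mod_cast hn
            linarith
        linarith
      · push_neg at hy
        have heq : (fun n : ℕ => if Y 0 ω' ≤ t - 1 / ((n : ℝ) + 1) then X 0 ω' else 0)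
            = fun _ => (0:ℝ) := by
          funext n
          rw [if_neg]
          push_neg
          have : (0:ℝ) < 1 / ((n : ℝ) + 1) := by positivity
          linarith
        rw [heq, if_neg (not_lt.2 hy)]
        exact tendsto_const_nhds
  have hFmlub : ∀ t c : ℝ, (∀ s, s < t → F s ≤ c) → Fm t ≤ c := by
    intro t c hc
    refine le_of_tendsto' (hFmseq t) fun n => hc _ ?_
    have : (0:ℝ) < 1 / ((n : ℝ) + 1) := by positivity
    linarith
  -- almost sure convergence at the grid points
  have haegrid : ∀ᵐ ω ∂μ, ∀ j ∈ (Finset.Icc 1 (⌈L / ε⌉₊ - 1) : Finset ℕ),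
      (Tendsto (fun n : ℕ => (1 / (n : ℝ)) * ∑ i ∈ range n,
          (if Y i ω ≤ wgcGridPt F ε j then X i ω else 0)) atTop (𝓝 (F (wgcGridPt F ε j))) ∧
       Tendsto (fun n : ℕ => (1 / (n : ℝ)) * ∑ i ∈ range n,
          (if Y i ω < wgcGridPt F ε j then X i ω else 0)) atTop (𝓝 (Fm (wgcGridPt F ε j)))) := by
    rw [eventually_all_finset]
    intro j _
    have h1 := wgc_slln μ X Y hmeas hindep hident hint
      (fun p => if p.2 ≤ wgcGridPt F ε j then p.1 else 0)
      (Measurable.ite (measurableSet_le measurable_snd measurable_const)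
        measurable_fst measurable_const)
      (fun p => by split_ifs <;> simp [abs_nonneg])
    have h2 := wgc_slln μ X Y hmeas hindep hident hint
      (fun p => if p.2 < wgcGridPt F ε j then p.1 else 0)
      (Measurable.ite (measurableSet_lt measurable_snd measurable_const)
        measurable_fst measurable_const)
      (fun p => by split_ifs <;> simp [abs_nonneg])
    filter_upwards [h1, h2] with ω hω1 hω2
    exact ⟨hω1, hω2⟩
  have haeS : ∀ᵐ ω ∂μ, Tendsto (fun n : ℕ => (1 / (n : ℝ)) * ∑ i ∈ range n, X i ω)
      atTop (𝓝 L) :=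
    wgc_slln μ X Y hmeas hindep hident hint (fun p => p.1) measurable_fst (fun p => le_rfl)
  filter_upwards [haegrid, haeS] with ω hgrid hSn
  -- eventual closeness at grid points
  have hev1 : ∀ᶠ n : ℕ in atTop, ∀ j ∈ (Finset.Icc 1 (⌈L / ε⌉₊ - 1) : Finset ℕ),
      |(1 / (n : ℝ)) * ∑ i ∈ range n,
          (if Y i ω ≤ wgcGridPt F ε j then X i ω else 0) - F (wgcGridPt F ε j)| ≤ ε ∧
      |(1 / (n : ℝ)) * ∑ i ∈ range n,
          (if Y i ω < wgcGridPt F ε j then X i ω else 0) - Fm (wgcGridPt F ε j)| ≤ ε := by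
    rw [eventually_all_finset]
    intro j hj
    obtain ⟨h1, h2⟩ := hgrid j hj
    have e1 := h1.eventually (Metric.ball_mem_nhds (F (wgcGridPt F ε j)) hε)
    have e2 := h2.eventually (Metric.ball_mem_nhds (Fm (wgcGridPt F ε j)) hε)
    filter_upwards [e1, e2] with n hn1 hn2
    rw [Real.dist_eq] at hn1 hn2
    exact ⟨hn1.le, hn2.le⟩
  have hevS : ∀ᶠ n : ℕ in atTop,
      |(1 / (n : ℝ)) * ∑ i ∈ range n, X i ω - L| ≤ ε := by
    have e := hSn.eventually (Metric.ball_mem_nhds L hε)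
    filter_upwards [e] with n hn
    rw [Real.dist_eq] at hn
    exact hn.le
  filter_upwards [hev1, hevS] with n h1 hSb
  intro t
  -- properties of the empirical functions for this fixed ω and n
  have hn0 : (0:ℝ) ≤ 1 / (n : ℝ) := by positivity
  have hFnmono : Monotone (fun t : ℝ => (1 / (n : ℝ)) * ∑ i ∈ range n,
      (if Y i ω ≤ t then X i ω else 0)) := by
    intro s u hsu
    dsimp only
    refine mul_le_mul_of_nonneg_left (Finset.sum_le_sum fun i _ => ?_) hn0
    split_ifs with ha hb
    exacts [le_rfl, absurd (ha.trans hsu) hb, hpos i ω, le_rfl]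
  have hFn0 : ∀ u : ℝ, 0 ≤ (1 / (n : ℝ)) * ∑ i ∈ range n,
      (if Y i ω ≤ u then X i ω else 0) := by
    intro u
    refine mul_nonneg hn0 (Finset.sum_nonneg fun i _ => ?_)
    split_ifs
    exacts [hpos i ω, le_rfl]
  have hFnS : ∀ u : ℝ, (1 / (n : ℝ)) * ∑ i ∈ range n, (if Y i ω ≤ u then X i ω else 0)
      ≤ (1 / (n : ℝ)) * ∑ i ∈ range n, X i ω := by
    intro u
    refine mul_le_mul_of_nonneg_left (Finset.sum_le_sum fun i _ => ?_) hn0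
    split_ifs
    exacts [le_rfl, hpos i ω]
  have hFnm : ∀ s u : ℝ, s < u →
      (1 / (n : ℝ)) * ∑ i ∈ range n, (if Y i ω ≤ s then X i ω else 0)
      ≤ (1 / (n : ℝ)) * ∑ i ∈ range n, (if Y i ω < u then X i ω else 0) := by
    intro s u hsu
    refine mul_le_mul_of_nonneg_left (Finset.sum_le_sum fun i _ => ?_) hn0
    split_ifs with ha hb
    exacts [le_rfl, absurd (ha.trans_lt hsu) hb, hpos i ω, le_rfl]
  exact wgc_det F Fm _ _ _ L ε hε hFmono hF0 hFL hFbot hFtop hrc hFmub hFmlub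
    hFnmono hFn0 hFnS hFnm
    (fun j hj1 hj2 => h1 j (Finset.mem_Icc.2 ⟨hj1, hj2⟩)) hSb t

/-- Weighted Glivenko–Cantelli theorem: for i.i.d. pairs `(Xᵢ, Yᵢ)` with `E|X₁| < ∞`,
`sup_t |(1/n) ∑ Xᵢ 1_{Yᵢ ≤ t} − E[X₁ 1_{Y₁ ≤ t}]| → 0` almost surely. -/
theorem weighted_glivenko_cantelli
    {Ω : Type*} [MeasurableSpace Ω] (μ : Measure Ω) [IsProbabilityMeasure μ]
    (X Y : ℕ → Ω → ℝ)
    (hmeas : ∀ i, Measurable (fun ω => (X i ω, Y i ω)))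
    (hindep : iIndepFun (fun i ω => (X i ω, Y i ω)) μ)
    (hident : ∀ i, IdentDistrib (fun ω => (X i ω, Y i ω)) (fun ω => (X 0 ω, Y 0 ω)) μ μ)
    (hint : Integrable (X 0) μ) :
    ∀ᵐ ω ∂μ, Tendsto (fun n : ℕ =>
        ⨆ t : ℝ,
          |(1 / (n : ℝ)) * ∑ i ∈ Finset.range n, (if Y i ω ≤ t then X i ω else 0)
            - ∫ ω', (if Y 0 ω' ≤ t then X 0 ω' else 0) ∂μ|)
      atTop (nhds 0) := by
  classical
  have hφp : Measurable (fun p : ℝ × ℝ => (max p.1 0, p.2)) :=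
    (measurable_fst.max measurable_const).prodMk measurable_snd
  have hφm : Measurable (fun p : ℝ × ℝ => (max (-p.1) 0, p.2)) :=
    (measurable_fst.neg.max measurable_const).prodMk measurable_snd
  have hX0meas : Measurable (X 0) := measurable_fst.comp (hmeas 0)
  -- hypotheses for the positive part
  have hmeasp : ∀ i, Measurable (fun ω => (max (X i ω) 0, Y i ω)) :=
    fun i => hφp.comp (hmeas i)
  have hindepp : iIndepFun
      (fun i ω => (max (X i ω) 0, Y i ω)) μ :=
    hindep.comp (fun _ => fun p : ℝ × ℝ => (max p.1 0, p.2)) (fun _ => hφp)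
  have hidentp : ∀ i, IdentDistrib (fun ω => (max (X i ω) 0, Y i ω))
      (fun ω => (max (X 0 ω) 0, Y 0 ω)) μ μ := fun i => (hident i).comp hφp
  have hintp : Integrable (fun ω => max (X 0 ω) 0) μ := by
    refine hint.mono ((hX0meas.max measurable_const).aestronglyMeasurable)
      (ae_of_all _ fun ω => ?_)
    simp only [Real.norm_eq_abs]
    rw [abs_of_nonneg (le_max_right _ _)]
    exact max_le (le_abs_self _) (abs_nonneg _)
  -- hypotheses for the negative part
  have hmeasm : ∀ i, Measurable (fun ω => (max (-(X i ω)) 0, Y i ω)) :=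
    fun i => hφm.comp (hmeas i)
  have hindepm : iIndepFun
      (fun i ω => (max (-(X i ω)) 0, Y i ω)) μ :=
    hindep.comp (fun _ => fun p : ℝ × ℝ => (max (-p.1) 0, p.2)) (fun _ => hφm)
  have hidentm : ∀ i, IdentDistrib (fun ω => (max (-(X i ω)) 0, Y i ω))
      (fun ω => (max (-(X 0 ω)) 0, Y 0 ω)) μ μ := fun i => (hident i).comp hφm
  have hintm : Integrable (fun ω => max (-(X 0 ω)) 0) μ := by
    refine hint.mono ((hX0meas.neg.max measurable_const).aestronglyMeasurable)
      (ae_of_all _ fun ω => ?_)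
    simp only [Real.norm_eq_abs]
    rw [abs_of_nonneg (le_max_right _ _)]
    exact max_le (by rw [← abs_neg]; exact le_abs_self _) (abs_nonneg _)
  -- integrability of truncated integrands
  have hintple : ∀ t : ℝ, Integrable (fun ω' => if Y 0 ω' ≤ t then max (X 0 ω') 0 else 0) μ := by
    intro t
    refine hint.mono (Measurable.aestronglyMeasurable (Measurable.ite
      (measurableSet_le (measurable_snd.comp (hmeas 0)) measurable_const)
      (hX0meas.max measurable_const) measurable_const)) (ae_of_all _ fun ω => ?_)
    simp only [Real.norm_eq_abs]
    split_ifs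
    · rw [abs_of_nonneg (le_max_right _ _)]
      exact max_le (le_abs_self _) (abs_nonneg _)
    · simp
  have hintmle : ∀ t : ℝ, Integrable (fun ω' => if Y 0 ω' ≤ t then max (-(X 0 ω')) 0 else 0) μ := by
    intro t
    refine hint.mono (Measurable.aestronglyMeasurable (Measurable.ite
      (measurableSet_le (measurable_snd.comp (hmeas 0)) measurable_const)
      (hX0meas.neg.max measurable_const) measurable_const)) (ae_of_all _ fun ω => ?_)
    simp only [Real.norm_eq_abs]
    split_ifs
    · rw [abs_of_nonneg (le_max_right _ _)]
      exact max_le (by rw [← abs_neg]; exact le_abs_self _) (abs_nonneg _)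
    · simp
  -- apply the positive-part result for each k
  have hae : ∀ᵐ ω ∂μ, ∀ k : ℕ,
      (∀ᶠ n : ℕ in atTop, ∀ t : ℝ,
        |(1 / (n : ℝ)) * ∑ i ∈ range n, (if Y i ω ≤ t then max (X i ω) 0 else 0)
          - ∫ ω', (if Y 0 ω' ≤ t then max (X 0 ω') 0 else 0) ∂μ| ≤ 2 * (1 / ((k : ℝ) + 1))) ∧
      (∀ᶠ n : ℕ in atTop, ∀ t : ℝ,
        |(1 / (n : ℝ)) * ∑ i ∈ range n, (if Y i ω ≤ t then max (-(X i ω)) 0 else 0)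
          - ∫ ω', (if Y 0 ω' ≤ t then max (-(X 0 ω')) 0 else 0) ∂μ| ≤ 2 * (1 / ((k : ℝ) + 1))) := by
    rw [ae_all_iff]
    intro k
    have h1 := wgc_pos μ (fun i ω => max (X i ω) 0) Y hmeasp hindepp hidentp hintp
      (fun i ω => le_max_right _ _) (1 / ((k : ℝ) + 1)) (by positivity)
    have h2 := wgc_pos μ (fun i ω => max (-(X i ω)) 0) Y hmeasm hindepm hidentm hintm
      (fun i ω => le_max_right _ _) (1 / ((k : ℝ) + 1)) (by positivity)
    filter_upwards [h1, h2] with ω hω1 hω2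
    exact ⟨hω1, hω2⟩
  filter_upwards [hae] with ω hω
  rw [show (nhds (0:ℝ)) = 𝓝 0 from rfl]
  rw [tendsto_order]
  constructor
  · intro a ha
    exact Eventually.of_forall fun n => lt_of_lt_of_le ha
      (Real.iSup_nonneg fun t => abs_nonneg _)
  · intro a ha
    obtain ⟨k, hk⟩ := exists_nat_one_div_lt (show (0:ℝ) < a / 4 by linarith)
    have hk4 : 4 / ((k : ℝ) + 1) < a := by
      have h4 : (4:ℝ) / ((k:ℝ) + 1) = 4 * (1 / ((k:ℝ) + 1)) := by ring
      rw [h4]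
      linarith
    obtain ⟨hp, hm⟩ := hω k
    filter_upwards [hp, hm] with n hpn hmn
    refine lt_of_le_of_lt (Real.iSup_le (fun t => ?_) (by positivity)) hk4
    have hsum : (1 / (n : ℝ)) * ∑ i ∈ range n, (if Y i ω ≤ t then X i ω else 0)
        = (1 / (n : ℝ)) * ∑ i ∈ range n, (if Y i ω ≤ t then max (X i ω) 0 else 0)
          - (1 / (n : ℝ)) * ∑ i ∈ range n, (if Y i ω ≤ t then max (-(X i ω)) 0 else 0) := by
      rw [← mul_sub, ← Finset.sum_sub_distrib]
      congr 1
      refine Finset.sum_congr rfl fun i _ => ?_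
      split_ifs
      · exact (max_zero_sub_eq_self _).symm
      · simp
    have hintgr : ∫ ω', (if Y 0 ω' ≤ t then X 0 ω' else 0) ∂μ
        = (∫ ω', (if Y 0 ω' ≤ t then max (X 0 ω') 0 else 0) ∂μ)
          - ∫ ω', (if Y 0 ω' ≤ t then max (-(X 0 ω')) 0 else 0) ∂μ := by
      rw [← integral_sub (hintple t) (hintmle t)]
      refine integral_congr_ae (ae_of_all _ fun ω' => ?_)
      dsimp only
      split_ifs
      · exact (max_zero_sub_eq_self _).symm
      · simp
    rw [hsum, hintgr]
    have habs : |((1 / (n : ℝ)) * ∑ i ∈ range n, (if Y i ω ≤ t then max (X i ω) 0 else 0)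
          - (1 / (n : ℝ)) * ∑ i ∈ range n, (if Y i ω ≤ t then max (-(X i ω)) 0 else 0))
        - ((∫ ω', (if Y 0 ω' ≤ t then max (X 0 ω') 0 else 0) ∂μ)
          - ∫ ω', (if Y 0 ω' ≤ t then max (-(X 0 ω')) 0 else 0) ∂μ)|
        ≤ |(1 / (n : ℝ)) * ∑ i ∈ range n, (if Y i ω ≤ t then max (X i ω) 0 else 0)
            - ∫ ω', (if Y 0 ω' ≤ t then max (X 0 ω') 0 else 0) ∂μ|
          + |(1 / (n : ℝ)) * ∑ i ∈ range n, (if Y i ω ≤ t then max (-(X i ω)) 0 else 0)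
            - ∫ ω', (if Y 0 ω' ≤ t then max (-(X 0 ω')) 0 else 0) ∂μ| := by
      have := abs_sub ((1 / (n : ℝ)) * ∑ i ∈ range n, (if Y i ω ≤ t then max (X i ω) 0 else 0)
            - ∫ ω', (if Y 0 ω' ≤ t then max (X 0 ω') 0 else 0) ∂μ)
          ((1 / (n : ℝ)) * ∑ i ∈ range n, (if Y i ω ≤ t then max (-(X i ω)) 0 else 0)
            - ∫ ω', (if Y 0 ω' ≤ t then max (-(X 0 ω')) 0 else 0) ∂μ)
      calc _ = |((1 / (n : ℝ)) * ∑ i ∈ range n, (if Y i ω ≤ t then max (X i ω) 0 else 0)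
            - ∫ ω', (if Y 0 ω' ≤ t then max (X 0 ω') 0 else 0) ∂μ)
          - ((1 / (n : ℝ)) * ∑ i ∈ range n, (if Y i ω ≤ t then max (-(X i ω)) 0 else 0)
            - ∫ ω', (if Y 0 ω' ≤ t then max (-(X 0 ω')) 0 else 0) ∂μ)| := by ring_nf
        _ ≤ _ := this
    refine habs.trans ?_
    have h1 := hpn t
    have h2 := hmn t
    have : (4:ℝ) / ((k:ℝ) + 1) = 2 * (1 / ((k:ℝ) + 1)) + 2 * (1 / ((k:ℝ) + 1)) := by ring
    rw [this]
    exact add_le_add h1 h2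
end

section
/- Let X_e, X_I be bounded real random variables and X_o a bounded ℝ^d-valued random variable on a probability space. Set Δ = X_e − E(X_e | X_I, X_o) and X_u = ρ₀Δ + ε, where ρ₀ ∈ ℝ and ε is a real random variable independent of (X_e, X_I, X_o) such that L(t) = E[exp(−εt)] is finite, strictly positive, and differentiable in t on [0, ∞). Let λ₀ : [0, ∞) → ℝ be continuous, β_e ∈ ℝ, β_o ∈ ℝ^d, and suppose the conditional survival function given (X_e, X_I, X_o, X_u) is S(t | X_e, X_I, X_o, X_u) = exp(−∫₀ᵗ λ₀(s) ds − (β_e X_e + β_oᵀ X_o + X_u) t). Then, defining S(t | X_e, X_I, X_o) = E[S(t | X_e, X_I, X_o, X_u) | X_e, X_I, X_o], there is a version of these conditional expectations such that almost surely, for every t > 0, −(∂/∂t) log S(t | X_e, X_I, X_o) = λ̄₀(t) + β_e X_e + β_oᵀ X_o + ρ₀Δ, where λ̄₀(t) = λ₀(t) − (d/dt) log L(t). -/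
open MeasureTheory ProbabilityTheory

/-- Collapsibility of the additive hazards model: integrating out the unobserved confounder
`X_u = ρ₀Δ + ε` from the conditional survival function
`S(t | X_e, X_I, X_o, X_u) = exp(−∫₀ᵗ λ₀ − (βₑXₑ + βₒᵀXₒ + X_u)t)`, there is a version `S̄` of
the conditional expectations `E[S(t|·) | X_e, X_I, X_o]` such that almost surely, for every
`t > 0`, `−(∂/∂t) log S̄(t) = λ₀(t) − L'(t)/L(t) + βₑXₑ + βₒᵀXₒ + ρ₀Δ`,
where `L(t) = E[exp(−εt)]` and `Δ = Xₑ − E(Xₑ | X_I, Xₒ)`. -/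
theorem additive_hazards_collapsible
    {Ω : Type*} {m0 : MeasurableSpace Ω} (μ : Measure Ω) [IsProbabilityMeasure μ]
    {d : ℕ}
    (Xe XI : Ω → ℝ) (Xo : Ω → Fin d → ℝ) (ε : Ω → ℝ)
    (hXe : Measurable Xe) (hXI : Measurable XI) (hXo : Measurable Xo) (hε : Measurable ε)
    (hXe_bdd : ∃ C : ℝ, ∀ ω, |Xe ω| ≤ C) (hXI_bdd : ∃ C : ℝ, ∀ ω, |XI ω| ≤ C)
    (hXo_bdd : ∃ C : ℝ, ∀ ω j, |Xo ω j| ≤ C)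
    (ρ₀ : ℝ)
    (hindep : IndepFun ε (fun ω => (Xe ω, XI ω, Xo ω)) μ)
    (m : MeasurableSpace Ω)
    (hm : m = MeasurableSpace.comap (fun ω => (XI ω, Xo ω)) inferInstance)
    (Δ : Ω → ℝ) (hΔ : Δ = fun ω => Xe ω - (μ[Xe | m]) ω)
    (Xu : Ω → ℝ) (hXu : Xu = fun ω => ρ₀ * Δ ω + ε ω)
    (L : ℝ → ℝ) (hLdef : ∀ t : ℝ, L t = ∫ ω, Real.exp (-(ε ω * t)) ∂μ)
    (hLint : ∀ t : ℝ, 0 ≤ t → Integrable (fun ω => Real.exp (-(ε ω * t))) μ)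
    (hLpos : ∀ t : ℝ, 0 ≤ t → 0 < L t)
    (L' : ℝ → ℝ) (hL' : ∀ t : ℝ, 0 ≤ t → HasDerivWithinAt L (L' t) (Set.Ici 0) t)
    (lam : ℝ → ℝ) (hlam : ContinuousOn lam (Set.Ici 0))
    (βe : ℝ) (βo : Fin d → ℝ)
    (S : ℝ → Ω → ℝ)
    (hS : ∀ t ω, S t ω = Real.exp (-(∫ s in (0:ℝ)..t, lam s)
      - (βe * Xe ω + (∑ j, βo j * Xo ω j) + Xu ω) * t))
    (mObs : MeasurableSpace Ω)
    (hmObs : mObs = MeasurableSpace.comap (fun ω => (Xe ω, XI ω, Xo ω)) inferInstance) :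
    ∃ Sbar : ℝ → Ω → ℝ,
      (∀ t : ℝ, 0 ≤ t → Sbar t =ᵐ[μ] μ[S t | mObs]) ∧
      (∀ᵐ ω ∂μ, ∀ t : ℝ, 0 < t →
        HasDerivAt (fun s => Real.log (Sbar s ω))
          (-((lam t - L' t / L t) + βe * Xe ω + (∑ j, βo j * Xo ω j) + ρ₀ * Δ ω)) t) := by
  obtain ⟨Ce, hCe⟩ := hXe_bdd
  obtain ⟨Co, hCo⟩ := hXo_bdd
  set A : Ω → ℝ := fun ω => βe * Xe ω + (∑ j, βo j * Xo ω j) + ρ₀ * Δ ω with hA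
  -- σ-algebra facts
  have hmObs_le : mObs ≤ m0 := by
    rw [hmObs]; exact (hXe.prodMk (hXI.prodMk hXo)).comap_le
  have hm_le : m ≤ mObs := by
    rw [hm, hmObs]
    have heq : (fun ω => (XI ω, Xo ω)) =
        (fun p : ℝ × ℝ × (Fin d → ℝ) => p.2) ∘ (fun ω => (Xe ω, XI ω, Xo ω)) := rfl
    rw [heq, ← MeasurableSpace.comap_comp]
    exact MeasurableSpace.comap_mono measurable_snd.comap_le
  have htriple : Measurable[mObs] (fun ω => (Xe ω, XI ω, Xo ω)) := by
    rw [hmObs]; exact Measurable.of_comap_le le_rfl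
  have hXe_mObs : Measurable[mObs] Xe := measurable_fst.comp htriple
  have hXo_mObs : Measurable[mObs] Xo := (measurable_snd.comp measurable_snd).comp htriple
  have hΔ_sm : StronglyMeasurable[mObs] Δ := by
    rw [hΔ]
    exact hXe_mObs.stronglyMeasurable.sub (stronglyMeasurable_condExp.mono hm_le)
  have hA_sm : StronglyMeasurable[mObs] A := by
    refine ((stronglyMeasurable_const.mul hXe_mObs.stronglyMeasurable).add
      (Measurable.stronglyMeasurable ?_)).add (stronglyMeasurable_const.mul hΔ_sm)
    exact Finset.measurable_sum _ fun j _ =>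
      measurable_const.mul ((measurable_pi_apply j).comp hXo_mObs)
  -- a.e. bound on Δ and A
  have hcond_bdd : ∀ᵐ ω ∂μ, |(μ[Xe|m]) ω| ≤ (Ce.toNNReal : ℝ) :=
    ae_bdd_condExp_of_ae_bdd (Filter.Eventually.of_forall fun ω =>
      (hCe ω).trans (Real.le_coe_toNNReal Ce))
  set CA : ℝ := |βe| * |Ce| + (∑ j : Fin d, |βo j| * |Co|) + |ρ₀| * (|Ce| + |Ce|) with hCA
  have hA_bdd : ∀ᵐ ω ∂μ, |A ω| ≤ CA := by
    filter_upwards [hcond_bdd] with ω hω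
    have h1 : |Xe ω| ≤ |Ce| := (hCe ω).trans (le_abs_self Ce)
    have h2 : |(μ[Xe|m]) ω| ≤ |Ce| := hω.trans (by
      rw [Real.coe_toNNReal']
      exact max_le (le_abs_self Ce) (abs_nonneg Ce))
    have hΔb : |Δ ω| ≤ |Ce| + |Ce| := by
      rw [hΔ]
      exact (abs_sub _ _).trans (add_le_add h1 h2)
    have hsum : |∑ j, βo j * Xo ω j| ≤ ∑ j : Fin d, |βo j| * |Co| := by
      refine (Finset.abs_sum_le_sum_abs _ _).trans (Finset.sum_le_sum fun j _ => ?_)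
      rw [abs_mul]
      exact mul_le_mul_of_nonneg_left ((hCo ω j).trans (le_abs_self Co)) (abs_nonneg _)
    calc |A ω| ≤ |βe * Xe ω + ∑ j, βo j * Xo ω j| + |ρ₀ * Δ ω| := abs_add_le _ _
      _ ≤ (|βe * Xe ω| + |∑ j, βo j * Xo ω j|) + |ρ₀ * Δ ω| := by
          exact add_le_add (abs_add_le _ _) le_rfl
      _ ≤ CA := by
          rw [hCA, abs_mul, abs_mul]
          refine add_le_add (add_le_add ?_ hsum) ?_
          · exact mul_le_mul_of_nonneg_left h1 (abs_nonneg _)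
          · exact mul_le_mul_of_nonneg_left hΔb (abs_nonneg _)
  refine ⟨fun t ω => Real.exp (-(∫ s in (0:ℝ)..t, lam s) - A ω * t) * L t, ?_, ?_⟩
  · -- version of the conditional expectation
    intro t ht
    set f : Ω → ℝ := fun ω => Real.exp (-(∫ s in (0:ℝ)..t, lam s) - A ω * t) with hf
    set g : Ω → ℝ := fun ω => Real.exp (-(ε ω * t)) with hg
    have hSfg : S t = f * g := by
      funext ω
      rw [hS, hXu]
      show _ = f ω * g ω
      rw [hf, hg, hA]
      simp only [← Real.exp_add]
      congr 1
      ring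
    have hf_sm : StronglyMeasurable[mObs] f :=
      Real.continuous_exp.comp_stronglyMeasurable
        (stronglyMeasurable_const.sub (hA_sm.mul stronglyMeasurable_const))
    have hf_bdd : ∀ᵐ ω ∂μ, ‖f ω‖ ≤ Real.exp (|∫ s in (0:ℝ)..t, lam s| + CA * |t|) := by
      filter_upwards [hA_bdd] with ω hω
      rw [hf, Real.norm_eq_abs, Real.abs_exp, Real.exp_le_exp]
      have h1 : -(∫ s in (0:ℝ)..t, lam s) ≤ |∫ s in (0:ℝ)..t, lam s| := neg_le_abs _
      have h2 : -(A ω * t) ≤ |A ω| * |t| := by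
        rw [← abs_mul]; exact neg_le_abs _
      have h3 : |A ω| * |t| ≤ CA * |t| := mul_le_mul_of_nonneg_right hω (abs_nonneg t)
      linarith
    have hg_int : Integrable g μ := hLint t ht
    have hgε_sm : StronglyMeasurable[MeasurableSpace.comap ε inferInstance] g := by
      refine Measurable.stronglyMeasurable ?_
      exact (Real.measurable_exp.comp (measurable_neg.comp (measurable_mul_const t))).comp
        (Measurable.of_comap_le le_rfl)
    have hindp : Indep (MeasurableSpace.comap ε inferInstance) mObs μ := by
      rw [hmObs]
      exact (IndepFun_iff_Indep _ _ _).mp hindep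
    have h1 : μ[S t | mObs] =ᵐ[μ] f * μ[g | mObs] := by
      rw [hSfg]
      exact condExp_stronglyMeasurable_mul_of_bound hmObs_le hf_sm hg_int _ hf_bdd
    have h2 : μ[g | mObs] =ᵐ[μ] fun _ => μ[g] :=
      condExp_indep_eq hε.comap_le hmObs_le hgε_sm hindp
    refine Filter.EventuallyEq.symm (h1.trans ?_)
    filter_upwards [h2] with ω hω
    show f ω * (μ[g | mObs]) ω = f ω * L t
    rw [hω, hLdef t]
  · -- derivative of the log
    refine Filter.Eventually.of_forall fun ω t ht => ?_
    have hIoi : Set.Ioi (0:ℝ) ∈ nhds t := Ioi_mem_nhds ht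
    have hIci : Set.Ici (0:ℝ) ∈ nhds t := Ici_mem_nhds ht
    -- derivative of the integral term
    have hInt : IntervalIntegrable lam MeasureTheory.volume 0 t := by
      refine ContinuousOn.intervalIntegrable (hlam.mono ?_)
      rw [Set.uIcc_of_le ht.le]
      exact Set.Icc_subset_Ici_self
    have hcontAt : ∀ x ∈ Set.Ioi (0:ℝ), ContinuousAt lam x := fun x hx =>
      (hlam x (Set.mem_Ici.mpr (le_of_lt (Set.mem_Ioi.mp hx)))).continuousAt (Ici_mem_nhds hx)
    have hmeasAt : StronglyMeasurableAtFilter lam (nhds t) :=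
      ContinuousAt.stronglyMeasurableAtFilter isOpen_Ioi hcontAt t ht
    have h₁ : HasDerivAt (fun s => ∫ u in (0:ℝ)..s, lam u) (lam t) t :=
      intervalIntegral.integral_hasDerivAt_right hInt hmeasAt (hcontAt t ht)
    have h₂ : HasDerivAt (fun s => A ω * s) (A ω) t := by
      simpa using (hasDerivAt_id t).const_mul (A ω)
    have hLt : HasDerivAt L (L' t) t := (hL' t ht.le).hasDerivAt hIci
    have h₃ : HasDerivAt (fun s => Real.log (L s)) (L' t / L t) t :=
      hLt.log (hLpos t ht.le).ne'
    have hG : HasDerivAt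
        (fun s => (-(∫ u in (0:ℝ)..s, lam u) - A ω * s) + Real.log (L s))
        ((-(lam t) - A ω) + L' t / L t) t := (h₁.neg.sub h₂).add h₃
    have hFG : (fun s => Real.log (Real.exp (-(∫ u in (0:ℝ)..s, lam u) - A ω * s) * L s))
        =ᶠ[nhds t] fun s => (-(∫ u in (0:ℝ)..s, lam u) - A ω * s) + Real.log (L s) := by
      filter_upwards [hIoi] with s hs
      rw [Real.log_mul (Real.exp_ne_zero _) (hLpos s (le_of_lt hs)).ne', Real.log_exp]
    have := hG.congr_of_eventuallyEq hFG
    refine this.congr_deriv ?_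
    rw [hA]
    ring
end

section
/- Let X_e, X_I be bounded real random variables and X_o a bounded ℝ^d-valued random variable on a probability space. Set Δ = X_e − E(X_e | X_I, X_o) and X_u = ρ₀Δ + ε, where ρ₀ ∈ ℝ and ε is a real random variable independent of (X_e, X_I, X_o) such that L(t) = E[exp(−εt)] is finite, strictly positive, and differentiable in t on [0, ∞). Let λ₁₀ : [0, ∞) → ℝ be continuous, β_e ∈ ℝ, β_o ∈ ℝ^d, and suppose the conditional cumulative incidence function of cause 1 given (X_e, X_I, X_o, X_u) is F₁(t | X_e, X_I, X_o, X_u) = 1 − exp(−∫₀ᵗ λ₁₀(s) ds − (β_e X_e + β_oᵀ X_o + X_u) t). Then, defining F₁(t | X_e, X_I, X_o) = E[F₁(t | X_e, X_I, X_o, X_u) | X_e, X_I, X_o], there is a version of these conditional expectations such that almost surely, for every t > 0, the subdistribution hazard −(∂/∂t) log(1 − F₁(t | X_e, X_I, X_o)) = λ̄₁₀(t) + β_e X_e + β_oᵀ X_o + ρ₀Δ, where λ̄₁₀(t) = λ₁₀(t) − (d/dt) log L(t). -/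
open MeasureTheory ProbabilityTheory

/-- Collapsibility of the additive subdistribution hazards model for competing risks:
integrating out the unobserved confounder `X_u = ρ₀Δ + ε` from the conditional cumulative
incidence function `F₁(t | Xₑ, X_I, Xₒ, X_u) = 1 − exp(−∫₀ᵗ λ₁₀ − (βₑXₑ + βₒᵀXₒ + X_u)t)`,
there is a version `F̄₁` of the conditional expectations `E[F₁(t|·) | Xₑ, X_I, Xₒ]` such that
almost surely, for every `t > 0`, the subdistribution hazard
`−(∂/∂t) log(1 − F̄₁(t)) = λ₁₀(t) − L'(t)/L(t) + βₑXₑ + βₒᵀXₒ + ρ₀Δ`,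
where `L(t) = E[exp(−εt)]` and `Δ = Xₑ − E(Xₑ | X_I, Xₒ)`. -/
theorem additive_subdistribution_hazards_collapsible
    {Ω : Type*} {m0 : MeasurableSpace Ω} (μ : Measure Ω) [IsProbabilityMeasure μ]
    {d : ℕ}
    (Xe XI : Ω → ℝ) (Xo : Ω → Fin d → ℝ) (ε : Ω → ℝ)
    (hXe : Measurable Xe) (hXI : Measurable XI) (hXo : Measurable Xo) (hε : Measurable ε)
    (hXe_bdd : ∃ C : ℝ, ∀ ω, |Xe ω| ≤ C) (hXI_bdd : ∃ C : ℝ, ∀ ω, |XI ω| ≤ C)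
    (hXo_bdd : ∃ C : ℝ, ∀ ω j, |Xo ω j| ≤ C)
    (ρ₀ : ℝ)
    (hindep : IndepFun ε (fun ω => (Xe ω, XI ω, Xo ω)) μ)
    (m : MeasurableSpace Ω)
    (hm : m = MeasurableSpace.comap (fun ω => (XI ω, Xo ω)) inferInstance)
    (Δ : Ω → ℝ) (hΔ : Δ = fun ω => Xe ω - (μ[Xe | m]) ω)
    (Xu : Ω → ℝ) (hXu : Xu = fun ω => ρ₀ * Δ ω + ε ω)
    (L : ℝ → ℝ) (hLdef : ∀ t : ℝ, L t = ∫ ω, Real.exp (-(ε ω * t)) ∂μ)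
    (hLint : ∀ t : ℝ, 0 ≤ t → Integrable (fun ω => Real.exp (-(ε ω * t))) μ)
    (hLpos : ∀ t : ℝ, 0 ≤ t → 0 < L t)
    (L' : ℝ → ℝ) (hL' : ∀ t : ℝ, 0 ≤ t → HasDerivWithinAt L (L' t) (Set.Ici 0) t)
    (lam : ℝ → ℝ) (hlam : ContinuousOn lam (Set.Ici 0))
    (βe : ℝ) (βo : Fin d → ℝ)
    (F₁ : ℝ → Ω → ℝ)
    (hF₁ : ∀ t ω, F₁ t ω = 1 - Real.exp (-(∫ s in (0:ℝ)..t, lam s)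
      - (βe * Xe ω + (∑ j, βo j * Xo ω j) + Xu ω) * t))
    (mObs : MeasurableSpace Ω)
    (hmObs : mObs = MeasurableSpace.comap (fun ω => (Xe ω, XI ω, Xo ω)) inferInstance) :
    ∃ F₁bar : ℝ → Ω → ℝ,
      (∀ t : ℝ, 0 ≤ t → F₁bar t =ᵐ[μ] μ[F₁ t | mObs]) ∧
      (∀ᵐ ω ∂μ, ∀ t : ℝ, 0 < t →
        HasDerivAt (fun s => Real.log (1 - F₁bar s ω))
          (-((lam t - L' t / L t) + βe * Xe ω + (∑ j, βo j * Xo ω j) + ρ₀ * Δ ω)) t) := by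
  classical
  -- abbreviations
  set a : Ω → ℝ := fun ω => βe * Xe ω + (∑ j, βo j * Xo ω j) + ρ₀ * Δ ω with ha
  set Λ : ℝ → ℝ := fun t => ∫ s in (0:ℝ)..t, lam s with hΛ
  -- the triple map is measurable w.r.t. mObs
  have htrip : Measurable[mObs] (fun ω => (Xe ω, XI ω, Xo ω)) := by
    rw [hmObs]; exact Measurable.of_comap_le le_rfl
  have hXe_obs : Measurable[mObs] Xe := measurable_fst.comp htrip
  have hXo_obs : Measurable[mObs] Xo := (measurable_snd.comp measurable_snd).comp htrip
  have hle : mObs ≤ m0 := by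
    rw [hmObs]; exact Measurable.comap_le (hXe.prodMk (hXI.prodMk hXo))
  have hm_le : m ≤ mObs := by
    rw [hm, hmObs]
    have hco : (fun ω => (XI ω, Xo ω))
        = (fun p : ℝ × ℝ × (Fin d → ℝ) => p.2) ∘ (fun ω => (Xe ω, XI ω, Xo ω)) := rfl
    rw [hco, ← MeasurableSpace.comap_comp]
    exact MeasurableSpace.comap_mono (Measurable.comap_le measurable_snd)
  have hΔ_sm : StronglyMeasurable[mObs] Δ := by
    rw [hΔ]
    exact hXe_obs.stronglyMeasurable.sub (stronglyMeasurable_condExp.mono hm_le)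
  have ha_sm : StronglyMeasurable[mObs] a := by
    refine ((hXe_obs.const_mul βe).stronglyMeasurable.add ?_).add
      (hΔ_sm.const_mul ρ₀)
    refine Finset.stronglyMeasurable_fun_sum _ (fun j _ => ?_)
    exact (((measurable_pi_apply j).comp hXo_obs).const_mul (βo j)).stronglyMeasurable
  -- uniform bounds
  obtain ⟨Ce, hCe⟩ := hXe_bdd
  obtain ⟨Co, hCo⟩ := hXo_bdd
  set C₀ : ℝ := max (max Ce Co) 0 with hC₀def
  have hC₀ : 0 ≤ C₀ := le_max_right _ _
  have hXeC : ∀ ω, |Xe ω| ≤ C₀ :=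
    fun ω => (hCe ω).trans (le_max_of_le_left (le_max_left _ _))
  have hcond : ∀ᵐ ω ∂μ, |(μ[Xe|m]) ω| ≤ C₀ := by
    have h := ae_bdd_condExp_of_ae_bdd (μ := μ) (m := m) (R := ⟨C₀, hC₀⟩)
      (Filter.Eventually.of_forall hXeC)
    exact h
  have hΔC : ∀ᵐ ω ∂μ, |Δ ω| ≤ 2 * C₀ := by
    filter_upwards [hcond] with ω hω
    rw [hΔ]
    calc |Xe ω - (μ[Xe|m]) ω| ≤ |Xe ω| + |(μ[Xe|m]) ω| := abs_sub _ _
    _ ≤ C₀ + C₀ := add_le_add (hXeC ω) hω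
    _ = 2 * C₀ := by ring
  set B : ℝ := |βe| * C₀ + (∑ j, |βo j|) * C₀ + |ρ₀| * (2 * C₀) with hBdef
  have haB : ∀ᵐ ω ∂μ, |a ω| ≤ B := by
    filter_upwards [hΔC] with ω hω
    have h1 : |βe * Xe ω| ≤ |βe| * C₀ := by
      rw [abs_mul]; exact mul_le_mul_of_nonneg_left (hXeC ω) (abs_nonneg _)
    have h2 : |∑ j, βo j * Xo ω j| ≤ (∑ j, |βo j|) * C₀ := by
      refine (Finset.abs_sum_le_sum_abs _ _).trans ?_
      rw [Finset.sum_mul]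
      refine Finset.sum_le_sum (fun j _ => ?_)
      rw [abs_mul]
      exact mul_le_mul_of_nonneg_left
        ((hCo ω j).trans (le_max_of_le_left (le_max_right _ _))) (abs_nonneg _)
    have h3 : |ρ₀ * Δ ω| ≤ |ρ₀| * (2 * C₀) := by
      rw [abs_mul]; exact mul_le_mul_of_nonneg_left hω (abs_nonneg _)
    calc |a ω| ≤ |βe * Xe ω + ∑ j, βo j * Xo ω j| + |ρ₀ * Δ ω| := abs_add_le _ _
    _ ≤ (|βe * Xe ω| + |∑ j, βo j * Xo ω j|) + |ρ₀ * Δ ω| :=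
        add_le_add_left (abs_add_le _ _) _
    _ ≤ B := by rw [hBdef]; exact add_le_add (add_le_add h1 h2) h3
  refine ⟨fun t ω => 1 - Real.exp (-(Λ t) - a ω * t) * L t, ?_, ?_⟩
  · -- conditional expectation version
    intro t ht
    set G : Ω → ℝ := fun ω => Real.exp (-(Λ t) - a ω * t) with hG
    set E : Ω → ℝ := fun ω => Real.exp (-(ε ω * t)) with hE
    have hF₁eq : F₁ t = (fun _ => (1 : ℝ)) - G * E := by
      funext ω
      have hexp : -(Λ t) - (βe * Xe ω + (∑ j, βo j * Xo ω j) + Xu ω) * t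
          = (-(Λ t) - a ω * t) + -(ε ω * t) := by
        rw [hXu]; ring
      simp only [Pi.sub_apply, Pi.mul_apply, hF₁ t ω, hG, hE, ← Real.exp_add]
      rw [← hexp]
    have hG_sm : StronglyMeasurable[mObs] G := by
      refine Real.continuous_exp.comp_stronglyMeasurable ?_
      exact stronglyMeasurable_const.sub (ha_sm.mul_const t)
    have hGbd : ∀ᵐ ω ∂μ, ‖G ω‖ ≤ Real.exp (|Λ t| + B * t) := by
      filter_upwards [haB] with ω hω
      rw [hG, Real.norm_eq_abs, Real.abs_exp, Real.exp_le_exp]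
      have h1 : -(Λ t) ≤ |Λ t| := neg_le_abs _
      have h2 : -(a ω * t) ≤ B * t := by
        calc -(a ω * t) ≤ |a ω * t| := neg_le_abs _
        _ = |a ω| * t := by rw [abs_mul, abs_of_nonneg ht]
        _ ≤ B * t := mul_le_mul_of_nonneg_right hω ht
      linarith
    have hE_int : Integrable E μ := hLint t ht
    have hGE_int : Integrable (G * E) μ :=
      hE_int.bdd_mul ((hG_sm.mono hle).aestronglyMeasurable) hGbd
    have h1 : μ[F₁ t | mObs] =ᵐ[μ] μ[(fun _ => (1:ℝ)) | mObs] - μ[G * E | mObs] := by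
      rw [hF₁eq]; exact condExp_sub (integrable_const 1) hGE_int mObs
    have h2 : μ[G * E | mObs] =ᵐ[μ] G * μ[E | mObs] :=
      condExp_mul_of_stronglyMeasurable_left hG_sm hGE_int hE_int
    have hindepE : Indep (MeasurableSpace.comap ε inferInstance) mObs μ := by
      rw [hmObs]
      exact (IndepFun_iff_Indep _ _ _).mp hindep
    have hE_sm : StronglyMeasurable[MeasurableSpace.comap ε inferInstance] E := by
      refine Measurable.stronglyMeasurable ?_
      exact (Real.measurable_exp.comp ((measurable_id.mul_const t).neg)).comp
        (Measurable.of_comap_le le_rfl)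
    have h3 : μ[E | mObs] =ᵐ[μ] fun _ => L t := by
      have := condExp_indep_eq (μ := μ) (Measurable.comap_le hε) hle hE_sm hindepE
      refine this.trans ?_
      refine Filter.Eventually.of_forall (fun ω => ?_)
      simp only [hLdef t, hE]
    -- combine
    have : μ[F₁ t | mObs] =ᵐ[μ] fun ω => 1 - G ω * L t := by
      refine h1.trans ?_
      rw [condExp_const hle]
      filter_upwards [h2, h3] with ω h2ω h3ω
      simp only [Pi.sub_apply, Pi.mul_apply] at h2ω ⊢
      rw [h2ω]
      simp only [Pi.mul_apply, h3ω]
    exact this.symm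
  · -- the hazard identity, pointwise in ω
    refine Filter.Eventually.of_forall (fun ω t ht => ?_)
    have hΛderiv : HasDerivAt Λ (lam t) t := by
      refine intervalIntegral.integral_hasDerivAt_right ?_ ?_ ?_
      · refine ContinuousOn.intervalIntegrable (hlam.mono ?_)
        rw [Set.uIcc_of_le ht.le]
        exact Set.Icc_subset_Ici_self
      · exact (hlam.mono Set.Ioi_subset_Ici_self).stronglyMeasurableAtFilter
          isOpen_Ioi t ht
      · exact (hlam t ht.le).continuousAt (Ici_mem_nhds ht)
    have hu : HasDerivAt (fun s => -(Λ s) - a ω * s) (-(lam t) - a ω) t := by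
      have h2 : HasDerivAt (fun s : ℝ => a ω * s) (a ω) t := by
        simpa using (hasDerivAt_id t).const_mul (a ω)
      exact hΛderiv.neg.sub h2
    have hL : HasDerivAt L (L' t) t := (hL' t ht.le).hasDerivAt (Ici_mem_nhds ht)
    have hg : HasDerivAt (fun s => Real.exp (-(Λ s) - a ω * s) * L s)
        (Real.exp (-(Λ t) - a ω * t) * (-(lam t) - a ω) * L t
          + Real.exp (-(Λ t) - a ω * t) * L' t) t := hu.exp.mul hL
    have hpos : 0 < Real.exp (-(Λ t) - a ω * t) * L t :=
      mul_pos (Real.exp_pos _) (hLpos t ht.le)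
    have hlog := hg.log (ne_of_gt hpos)
    have hfun : (fun s => Real.log (1 - (1 - Real.exp (-(Λ s) - a ω * s) * L s)))
        = fun s => Real.log (Real.exp (-(Λ s) - a ω * s) * L s) := by
      funext s; rw [sub_sub_cancel]
    rw [hfun]
    convert hlog using 1
    have hLne : L t ≠ 0 := ne_of_gt (hLpos t ht.le)
    have hexpne : Real.exp (-(Λ t) - a ω * t) ≠ 0 := (Real.exp_pos _).ne'
    rw [ha]
    field_simp
    ring
end

section
/- Let (F_t)_{t ∈ [0,1]} be a filtration on a probability space and M = (M(t))_{t ∈ [0,1]} a martingale with respect to (F_t) with E[M(t)²] < ∞ for every t. For each t ∈ [0,1], let w(t) be a square-integrable random variable such that E[w(t) | F_t] = G(t) almost surely, where G : [0,1] → ℝ is a deterministic function. Then for all 0 ≤ s ≤ t ≤ 1, E[w(t)(M(t) − M(s)) | F_s] = 0 almost surely. -/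
open MeasureTheory ProbabilityTheory

lemma memL2_integrable_mul' {Ω : Type*} {m0 : MeasurableSpace Ω} {μ : Measure Ω}
    {f g : Ω → ℝ} (hf : MemLp f 2 μ) (hg : MemLp g 2 μ) :
    Integrable (fun ω => f ω * g ω) μ := by
  have hint : Integrable (fun ω => (1/2 : ℝ) * (f ω ^ 2 + g ω ^ 2)) μ :=
    (hf.integrable_sq.add hg.integrable_sq).const_mul _
  refine hint.mono' (hf.1.mul hg.1) ?_
  filter_upwards with ω
  rw [Real.norm_eq_abs, abs_mul]
  nlinarith [sq_nonneg (|f ω| - |g ω|), abs_nonneg (f ω), abs_nonneg (g ω),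
    sq_abs (f ω), sq_abs (g ω)]

/-- If `M` is a square-integrable martingale on `[0,1]` and, for each `t`, `w(t)` is a
square-integrable random variable (not necessarily adapted) with `E[w(t) | F_t] = G(t)` a.s.
for a deterministic function `G`, then `E[w(t)(M(t) − M(s)) | F_s] = 0` a.s. for `s ≤ t`. -/
theorem condexp_weight_martingale_increment
    {Ω : Type*} {m0 : MeasurableSpace Ω} (μ : Measure Ω) [IsProbabilityMeasure μ]
    (ℱ : Filtration (Set.Icc (0:ℝ) 1) m0)
    (M : Set.Icc (0:ℝ) 1 → Ω → ℝ)
    (hM : Martingale M ℱ μ)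
    (hM2 : ∀ t : Set.Icc (0:ℝ) 1, MemLp (M t) 2 μ)
    (w : Set.Icc (0:ℝ) 1 → Ω → ℝ) (G : Set.Icc (0:ℝ) 1 → ℝ)
    (hw2 : ∀ t : Set.Icc (0:ℝ) 1, MemLp (w t) 2 μ)
    (hwG : ∀ t : Set.Icc (0:ℝ) 1, μ[w t | ℱ t] =ᵐ[μ] fun _ => G t) :
    ∀ s t : Set.Icc (0:ℝ) 1, s ≤ t →
      μ[fun ω => w t ω * (M t ω - M s ω) | ℱ s] =ᵐ[μ] 0 := by
  intro s t hst
  have hle : ℱ s ≤ ℱ t := ℱ.mono hst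
  -- the increment is F_t-strongly measurable
  have hD : StronglyMeasurable[ℱ t] (fun ω => M t ω - M s ω) :=
    (hM.stronglyAdapted t).sub ((hM.stronglyAdapted s).mono hle)
  have hDmem : MemLp (fun ω => M t ω - M s ω) 2 μ := (hM2 t).sub (hM2 s)
  have hint : Integrable (fun ω => (M t ω - M s ω) * w t ω) μ :=
    memL2_integrable_mul' hDmem (hw2 t)
  -- pull-out property at time t
  have hpull : μ[(fun ω => M t ω - M s ω) * w t | ℱ t] =ᵐ[μ]
      (fun ω => M t ω - M s ω) * μ[w t | ℱ t] :=
    condExp_mul_of_stronglyMeasurable_left hD hint ((hw2 t).integrable one_le_two)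
  have hGt : (fun ω => M t ω - M s ω) * μ[w t | ℱ t] =ᵐ[μ]
      fun ω => G t * (M t ω - M s ω) := by
    filter_upwards [hwG t] with ω hω
    simp [hω, mul_comm]
  -- tower property
  have htower : μ[fun ω => w t ω * (M t ω - M s ω) | ℱ s] =ᵐ[μ]
      μ[μ[fun ω => w t ω * (M t ω - M s ω) | ℱ t] | ℱ s] :=
    (condExp_condExp_of_le hle (ℱ.le t)).symm
  have heq : (fun ω => w t ω * (M t ω - M s ω)) = (fun ω => M t ω - M s ω) * w t := by
    funext ω; simp [mul_comm]
  refine htower.trans ?_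
  have h1 : μ[μ[fun ω => w t ω * (M t ω - M s ω) | ℱ t] | ℱ s] =ᵐ[μ]
      μ[fun ω => G t * (M t ω - M s ω) | ℱ s] := by
    refine condExp_congr_ae ?_
    rw [heq]
    exact hpull.trans hGt
  refine h1.trans ?_
  have h2 : μ[fun ω => G t * (M t ω - M s ω) | ℱ s] =ᵐ[μ]
      fun ω => G t * (μ[fun ω => M t ω - M s ω | ℱ s]) ω := by
    have := condExp_smul (μ := μ) (m := ℱ s) (G t) (fun ω => M t ω - M s ω)
    filter_upwards [this] with ω hω
    simpa [Pi.smul_def, smul_eq_mul] using hω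
  refine h2.trans ?_
  have h3 : μ[fun ω => M t ω - M s ω | ℱ s] =ᵐ[μ] 0 := by
    show μ[M t - M s | ℱ s] =ᵐ[μ] 0
    have hsub := condExp_sub (m := ℱ s) (hM.integrable t) (hM.integrable s)
    have hMt : μ[M t | ℱ s] =ᵐ[μ] M s := hM.condExp_ae_eq hst
    have hMs : μ[M s | ℱ s] =ᵐ[μ] M s :=
      Filter.EventuallyEq.of_eq
        (condExp_of_stronglyMeasurable (ℱ.le s) (hM.stronglyAdapted s) (hM.integrable s))
    filter_upwards [hsub, hMt, hMs] with ω h1 h2 h3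
    simp only [Pi.sub_apply] at h1 h2 h3 ⊢
    simp [h1, h2, h3]
  filter_upwards [h3] with ω hω
  simp [hω]
end

section
/- Let C and T be real-valued random variables and W a random element of a measurable space, defined on a common probability space, such that C is independent of the pair (T, W). Let G(u) = P(C ≥ u), fix t ≥ 0, and assume G(min(T, t)) > 0 almost surely. Then E[1_{C ≥ min(T,t)} / G(min(T, t)) | σ(T, W)] = 1 almost surely, and consequently E[1_{C ≥ min(T,t)} · G(t) / G(min(T, t)) | σ(T, W)] = G(t) almost surely. -/
open MeasureTheory ProbabilityTheory

/-- Inverse-probability-of-censoring-weighting identity: if `C` is independent of `(T, W)`,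
`G(u) = P(C ≥ u)`, `t ≥ 0` and `G(min(T,t)) > 0` a.s., then
`E[1_{C ≥ min(T,t)} / G(min(T,t)) | σ(T,W)] = 1` a.s., and consequently
`E[1_{C ≥ min(T,t)} · G(t) / G(min(T,t)) | σ(T,W)] = G(t)` a.s. -/
theorem ipcw_conditional_expectation
    {Ω E : Type*} {m0 : MeasurableSpace Ω} [MeasurableSpace E]
    (μ : Measure Ω) [IsProbabilityMeasure μ]
    (C T : Ω → ℝ) (W : Ω → E)
    (hC : Measurable C) (hT : Measurable T) (hW : Measurable W)
    (hindep : IndepFun C (fun ω => (T ω, W ω)) μ)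
    (G : ℝ → ℝ) (hG : ∀ u : ℝ, G u = (μ {ω | u ≤ C ω}).toReal)
    (t : ℝ) (ht : 0 ≤ t)
    (hpos : ∀ᵐ ω ∂μ, 0 < G (min (T ω) t)) :
    (μ[fun ω => (if min (T ω) t ≤ C ω then (1:ℝ) else 0) / G (min (T ω) t)
          | MeasurableSpace.comap (fun ω => (T ω, W ω)) inferInstance]
        =ᵐ[μ] fun _ => 1) ∧
    (μ[fun ω => (if min (T ω) t ≤ C ω then (1:ℝ) else 0) * G t / G (min (T ω) t)
          | MeasurableSpace.comap (fun ω => (T ω, W ω)) inferInstance]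
        =ᵐ[μ] fun _ => G t) := by
  classical
  set Y : Ω → ℝ × E := fun ω => (T ω, W ω) with hYdef
  have hY : Measurable Y := hT.prodMk hW
  have hm : MeasurableSpace.comap Y inferInstance ≤ m0 := hY.comap_le
  set κ : Measure ℝ := μ.map C with hκdef
  set ν : Measure (ℝ × E) := μ.map Y with hνdef
  haveI : IsProbabilityMeasure κ := Measure.isProbabilityMeasure_map hC.aemeasurable
  haveI : IsProbabilityMeasure ν := Measure.isProbabilityMeasure_map hY.aemeasurable
  have hGκ : ∀ u : ℝ, G u = (κ (Set.Ici u)).toReal := by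
    intro u
    rw [hG u, hκdef, Measure.map_apply hC measurableSet_Ici]
    rfl
  have hGnonneg : ∀ u : ℝ, 0 ≤ G u := fun u => (hGκ u) ▸ ENNReal.toReal_nonneg
  have hGofReal : ∀ u : ℝ, ENNReal.ofReal (G u) = κ (Set.Ici u) := by
    intro u
    rw [hGκ u, ENNReal.ofReal_toReal (measure_ne_top κ _)]
  have hκanti : Antitone fun u : ℝ => κ (Set.Ici u) := by
    intro a b hab
    exact measure_mono (Set.Ici_subset_Ici.mpr hab)
  have hGmeas : Measurable G := by
    have : G = fun u => (κ (Set.Ici u)).toReal := funext hGκ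
    rw [this]
    exact hκanti.measurable.ennreal_toReal
  -- the weight function
  set f : Ω → ℝ := fun ω =>
    (if min (T ω) t ≤ C ω then (1:ℝ) else 0) / G (min (T ω) t) with hfdef
  have hu : Measurable fun ω => min (T ω) t := hT.min measurable_const
  have hSmeas : MeasurableSet {ω | min (T ω) t ≤ C ω} := measurableSet_le hu hC
  have hind_meas : Measurable fun ω => (if min (T ω) t ≤ C ω then (1:ℝ) else 0) :=
    Measurable.ite hSmeas measurable_const measurable_const
  have hf_meas : Measurable f := hind_meas.div (hGmeas.comp hu)
  have hf_nonneg : ∀ ω, 0 ≤ f ω := by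
    intro ω
    apply div_nonneg _ (hGnonneg _)
    split <;> norm_num
  -- the product structure
  have hprod : μ.map (fun ω => (C ω, Y ω)) = κ.prod ν :=
    (indepFun_iff_map_prod_eq_prod_map_map hC.aemeasurable hY.aemeasurable).mp hindep
  -- positivity pushed to ν
  have hposset : MeasurableSet {y : ℝ × E | 0 < G (min y.1 t)} :=
    measurableSet_lt measurable_const (hGmeas.comp (measurable_fst.min measurable_const))
  have hposν : ∀ᵐ y ∂ν, 0 < G (min y.1 t) := by
    rw [hνdef, MeasureTheory.ae_map_iff hY.aemeasurable hposset]
    exact hpos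
  -- key lintegral identity
  have key : ∀ A : Set (ℝ × E), MeasurableSet A →
      ∫⁻ ω in Y ⁻¹' A, ENNReal.ofReal (f ω) ∂μ = μ (Y ⁻¹' A) := by
    intro A hA
    set F : ℝ × (ℝ × E) → ENNReal := fun p =>
      if p.2 ∈ A ∧ min p.2.1 t ≤ p.1 then (κ (Set.Ici (min p.2.1 t)))⁻¹ else 0 with hFdef
    have hq_meas : Measurable fun p : ℝ × (ℝ × E) => (κ (Set.Ici (min p.2.1 t)))⁻¹ :=
      (hκanti.measurable.comp ((measurable_fst.comp measurable_snd).min measurable_const)).inv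
    have hB : MeasurableSet {p : ℝ × (ℝ × E) | min p.2.1 t ≤ p.1} :=
      measurableSet_le ((measurable_fst.comp measurable_snd).min measurable_const) measurable_fst
    have hF_meas : Measurable F :=
      Measurable.ite ((hA.preimage measurable_snd).inter hB) hq_meas measurable_const
    have step1 : ∀ᵐ ω ∂μ,
        (Y ⁻¹' A).indicator (fun ω => ENNReal.ofReal (f ω)) ω = F (C ω, Y ω) := by
      filter_upwards [hpos] with ω hω
      show (Y ⁻¹' A).indicator (fun ω => ENNReal.ofReal (f ω)) ω
          = if Y ω ∈ A ∧ min (T ω) t ≤ C ω then (κ (Set.Ici (min (T ω) t)))⁻¹ else 0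
      rw [Set.indicator_apply]
      by_cases hAω : ω ∈ Y ⁻¹' A
      · by_cases hle : min (T ω) t ≤ C ω
        · rw [if_pos hAω, if_pos ⟨hAω, hle⟩]
          show ENNReal.ofReal ((if min (T ω) t ≤ C ω then (1:ℝ) else 0) / G (min (T ω) t)) = _
          rw [if_pos hle, one_div, ENNReal.ofReal_inv_of_pos hω, hGofReal]
        · rw [if_pos hAω, if_neg (fun h => hle h.2)]
          show ENNReal.ofReal ((if min (T ω) t ≤ C ω then (1:ℝ) else 0) / G (min (T ω) t)) = 0
          rw [if_neg hle, zero_div, ENNReal.ofReal_zero]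
      · rw [if_neg hAω, if_neg (fun h => hAω h.1)]
    have inner : ∀ y : ℝ × E, ∫⁻ c, F (c, y) ∂κ =
        A.indicator (fun y => (κ (Set.Ici (min y.1 t)))⁻¹ * κ (Set.Ici (min y.1 t))) y := by
      intro y
      by_cases hAy : y ∈ A
      · have hFy : (fun c => F (c, y)) =
            (Set.Ici (min y.1 t)).indicator fun _ => (κ (Set.Ici (min y.1 t)))⁻¹ := by
          funext c
          show (if y ∈ A ∧ min y.1 t ≤ c then (κ (Set.Ici (min y.1 t)))⁻¹ else 0) = _
          by_cases hle : min y.1 t ≤ c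
          · rw [if_pos ⟨hAy, hle⟩, Set.indicator_of_mem (Set.mem_Ici.mpr hle)]
          · rw [if_neg (fun h => hle h.2),
              Set.indicator_of_notMem (fun h => hle (Set.mem_Ici.mp h))]
        rw [hFy, lintegral_indicator measurableSet_Ici, Set.indicator_of_mem hAy,
          setLIntegral_const]
      · have hFy : (fun c => F (c, y)) = fun _ => 0 := by
          funext c
          exact if_neg (fun h => hAy h.1)
        rw [hFy, lintegral_const, zero_mul, Set.indicator_of_notMem hAy]
    calc ∫⁻ ω in Y ⁻¹' A, ENNReal.ofReal (f ω) ∂μ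
        = ∫⁻ ω, (Y ⁻¹' A).indicator (fun ω => ENNReal.ofReal (f ω)) ω ∂μ :=
          (lintegral_indicator (hY hA) _).symm
      _ = ∫⁻ ω, F (C ω, Y ω) ∂μ := lintegral_congr_ae step1
      _ = ∫⁻ p, F p ∂(μ.map fun ω => (C ω, Y ω)) :=
          (lintegral_map hF_meas (hC.prodMk hY)).symm
      _ = ∫⁻ p, F p ∂(κ.prod ν) := by rw [hprod]
      _ = ∫⁻ y, ∫⁻ c, F (c, y) ∂κ ∂ν := lintegral_prod_symm F hF_meas.aemeasurable
      _ = ∫⁻ y, A.indicator (fun _ => (1 : ENNReal)) y ∂ν := by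
          apply lintegral_congr_ae
          filter_upwards [hposν] with y hy
          rw [inner y]
          by_cases hAy : y ∈ A
          · rw [Set.indicator_of_mem hAy, Set.indicator_of_mem hAy,
              ENNReal.inv_mul_cancel]
            · rw [← hGofReal]
              simpa using (ENNReal.ofReal_pos.mpr hy).ne'
            · exact measure_ne_top κ _
          · rw [Set.indicator_of_notMem hAy, Set.indicator_of_notMem hAy]
      _ = ν A := by rw [lintegral_indicator hA, setLIntegral_one]
      _ = μ (Y ⁻¹' A) := Measure.map_apply hY hA
  -- integrability of f
  have hf_int : Integrable f μ := by
    refine ⟨hf_meas.aestronglyMeasurable, ?_⟩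
    rw [hasFiniteIntegral_iff_ofReal (Filter.Eventually.of_forall hf_nonneg)]
    have := key Set.univ MeasurableSet.univ
    rw [Set.preimage_univ, Measure.restrict_univ] at this
    rw [this]
    exact measure_lt_top μ _
  -- conditional expectation of f is 1
  have h1 : (fun _ : Ω => (1:ℝ)) =ᵐ[μ] μ[f|MeasurableSpace.comap Y inferInstance] := by
    refine ae_eq_condExp_of_forall_setIntegral_eq hm hf_int
      (fun s _ _ => (integrable_const 1).integrableOn) ?_
      (StronglyMeasurable.aestronglyMeasurable stronglyMeasurable_const)
    intro s hs _
    obtain ⟨A, hA, rfl⟩ := hs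
    have hAmeas : MeasurableSet A := hA
    have hleft : ∫ x in Y ⁻¹' A, (1:ℝ) ∂μ = (μ (Y ⁻¹' A)).toReal := by
      simp [Measure.real]
    have hright : ∫ x in Y ⁻¹' A, f x ∂μ = (μ (Y ⁻¹' A)).toReal := by
      rw [integral_eq_lintegral_of_nonneg_ae
        (Filter.Eventually.of_forall fun ω => hf_nonneg ω)
        hf_meas.aestronglyMeasurable.restrict]
      rw [key A hAmeas]
    rw [hleft, hright]
  have hsmul : (fun ω => (if min (T ω) t ≤ C ω then (1:ℝ) else 0) * G t / G (min (T ω) t)) =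
      G t • f := by
    funext ω
    simp only [hfdef, Pi.smul_apply, smul_eq_mul]
    ring
  constructor
  · exact h1.symm
  · calc μ[fun ω => (if min (T ω) t ≤ C ω then (1:ℝ) else 0) * G t / G (min (T ω) t)|MeasurableSpace.comap Y inferInstance]
        = μ[G t • f|MeasurableSpace.comap Y inferInstance] := by rw [hsmul]
      _ =ᵐ[μ] G t • μ[f|MeasurableSpace.comap Y inferInstance] := condExp_smul (G t) f _
      _ =ᵐ[μ] fun _ => G t := by
          filter_upwards [h1] with ω hω
          simp [← hω]
end

section
/- Let C and T be real-valued random variables and J, Z random elements of measurable spaces, defined on a common probability space, such that C is independent of (T, J, Z). Let G(u) = P(C ≥ u), fix t ≥ 0, assume G(min(T, t)) > 0 almost surely, and define the censoring weight w(t) = 1_{C ≥ min(T,t)} · G(t) / G(min(T, t)). Then for every bounded measurable real-valued function f of (T, J, Z): (i) E[w(t) · f(T, J, Z)] = E[1_{C ≥ t} · f(T, J, Z)] = G(t) · E[f(T, J, Z)], and (ii) E[w(t) · f(T, J, Z) | σ(Z)] = E[1_{C ≥ t} · f(T, J, Z) | σ(Z)] almost surely. -/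
open MeasureTheory ProbabilityTheory

lemma ipcw_bdd_integrable {Ω : Type*} {m0 : MeasurableSpace Ω} {μ : Measure Ω}
    [IsFiniteMeasure μ] {h : Ω → ℝ} (hm : AEStronglyMeasurable h μ) {Cb : ℝ}
    (hb : ∀ ω, |h ω| ≤ Cb) : Integrable h μ :=
  ⟨hm, HasFiniteIntegral.of_bounded (C := Cb) (ae_of_all μ fun ω => by
    simpa [Real.norm_eq_abs] using hb ω)⟩

lemma ipcw_indicator_integral {Ω : Type*} {m0 : MeasurableSpace Ω} (μ : Measure Ω)
    [IsFiniteMeasure μ] (u : ℝ) (C : Ω → ℝ) (hC : Measurable C) :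
    ∫ ω, (if u ≤ C ω then (1:ℝ) else 0) ∂μ = (μ {ω | u ≤ C ω}).toReal := by
  have h1 : (fun ω => (if u ≤ C ω then (1:ℝ) else 0))
      = Set.indicator {ω | u ≤ C ω} (1 : Ω → ℝ) := by
    funext ω; simp [Set.indicator_apply, Set.mem_setOf_eq]
  rw [h1, integral_indicator_one (measurableSet_le measurable_const hC)]
  rfl

lemma ipcw_core {Ω E₁ E₂ : Type*} {m0 : MeasurableSpace Ω} [MeasurableSpace E₁]
    [MeasurableSpace E₂]
    (μ : Measure Ω) [IsProbabilityMeasure μ]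
    (C T : Ω → ℝ) (J : Ω → E₁) (Z : Ω → E₂)
    (hC : Measurable C) (hT : Measurable T) (hJ : Measurable J) (hZ : Measurable Z)
    (hindep : IndepFun C (fun ω => (T ω, J ω, Z ω)) μ)
    (G : ℝ → ℝ) (hG : ∀ u : ℝ, G u = (μ {ω | u ≤ C ω}).toReal)
    (t : ℝ) (hpos : ∀ᵐ ω ∂μ, 0 < G (min (T ω) t))
    (g : ℝ × E₁ × E₂ → ℝ) (hg : Measurable g) (Cb : ℝ) (hCb0 : 0 ≤ Cb)
    (hCb : ∀ x, |g x| ≤ Cb) :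
    Integrable (fun ω => (if min (T ω) t ≤ C ω then (1:ℝ) else 0) * G t / G (min (T ω) t)
        * g (T ω, J ω, Z ω)) μ ∧
    ∫ ω, (if min (T ω) t ≤ C ω then (1:ℝ) else 0) * G t / G (min (T ω) t)
        * g (T ω, J ω, Z ω) ∂μ = G t * ∫ ω, g (T ω, J ω, Z ω) ∂μ := by
  -- basic facts about G
  have hGnn : ∀ u, 0 ≤ G u := fun u => (hG u).symm ▸ ENNReal.toReal_nonneg
  have hGanti : Antitone G := by
    intro a b hab
    rw [hG a, hG b]
    exact ENNReal.toReal_mono (measure_ne_top μ _)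
      (measure_mono fun ω h => le_trans hab h)
  have hGm : Measurable G := hGanti.measurable
  set V : Ω → ℝ × E₁ × E₂ := fun ω => (T ω, J ω, Z ω) with hVdef
  have hV : Measurable V := hT.prodMk (hJ.prodMk hZ)
  have hVC : Measurable (fun ω => (V ω, C ω)) := hV.prodMk hC
  set F : (ℝ × E₁ × E₂) × ℝ → ℝ := fun p =>
    (if min p.1.1 t ≤ p.2 then (1:ℝ) else 0) * (G t / G (min p.1.1 t) * g p.1) with hFdef
  have humeas : Measurable (fun p : (ℝ × E₁ × E₂) × ℝ => min p.1.1 t) :=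
    measurable_fst.fst.min measurable_const
  have hF : Measurable F := by
    apply Measurable.mul
    · exact Measurable.ite (measurableSet_le humeas measurable_snd)
        measurable_const measurable_const
    · exact (measurable_const.div (hGm.comp humeas)).mul (hg.comp measurable_fst)
  haveI : IsProbabilityMeasure (μ.map C) := Measure.isProbabilityMeasure_map hC.aemeasurable
  haveI : IsProbabilityMeasure (μ.map V) := Measure.isProbabilityMeasure_map hV.aemeasurable
  have hmap : μ.map (fun ω => (V ω, C ω)) = (μ.map V).prod (μ.map C) :=
    (indepFun_iff_map_prod_eq_prod_map_map hV.aemeasurable hC.aemeasurable).mp hindep.symm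
  have hposV : ∀ᵐ v ∂(μ.map V), 0 < G (min v.1 t) := by
    have hms : MeasurableSet {v : ℝ × E₁ × E₂ | 0 < G (min v.1 t)} :=
      measurableSet_lt measurable_const (hGm.comp (measurable_fst.min measurable_const))
    exact (MeasureTheory.ae_map_iff hV.aemeasurable hms).mpr hpos
  have hCmap : ∀ u : ℝ, ∫ c, (if u ≤ c then (1:ℝ) else 0) ∂(μ.map C) = G u := by
    intro u
    have h := ipcw_indicator_integral (μ.map C) u id measurable_id
    have h2 : (Measure.map C μ) {c | u ≤ id c} = μ {ω | u ≤ C ω} := by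
      rw [Measure.map_apply hC (measurableSet_le measurable_const measurable_id)]; rfl
    rw [hG u]
    exact h.trans (by rw [h2])
  have hslice : ∀ v : ℝ × E₁ × E₂, ∫ c, F (v, c) ∂(μ.map C)
      = G (min v.1 t) * (G t / G (min v.1 t) * g v) := by
    intro v
    have h0 : (fun c => F (v, c)) = fun c =>
        (if min v.1 t ≤ c then (1:ℝ) else 0) * (G t / G (min v.1 t) * g v) := rfl
    rw [h0, integral_mul_const, hCmap]
  have hnormslice : ∀ v : ℝ × E₁ × E₂, ∫ c, ‖F (v, c)‖ ∂(μ.map C)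
      = G (min v.1 t) * (G t / G (min v.1 t) * |g v|) := by
    intro v
    have h2 : (fun c => ‖F (v, c)‖) = fun c =>
        (if min v.1 t ≤ c then (1:ℝ) else 0) * (G t / G (min v.1 t) * |g v|) := by
      funext c
      simp only [hFdef, Real.norm_eq_abs, abs_mul]
      congr 1
      · split_ifs <;> simp
      · rw [abs_of_nonneg (div_nonneg (hGnn t) (hGnn _))]
    rw [h2, integral_mul_const, hCmap]
  have hsliceint : ∀ v : ℝ × E₁ × E₂, Integrable (fun c => F (v, c)) (μ.map C) := by
    intro v
    refine ipcw_bdd_integrable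
      ((hF.comp (measurable_const.prodMk measurable_id)).aestronglyMeasurable)
      (Cb := |G t / G (min v.1 t) * g v|) fun c => ?_
    simp only [hFdef]
    split_ifs <;> simp <;> positivity
  have hnormint : Integrable (fun v => ∫ c, ‖F (v, c)‖ ∂(μ.map C)) (μ.map V) := by
    have h3 : (fun v : ℝ × E₁ × E₂ => ∫ c, ‖F (v, c)‖ ∂(μ.map C))
        = fun v => G (min v.1 t) * (G t / G (min v.1 t) * |g v|) := funext hnormslice
    rw [h3]
    refine ipcw_bdd_integrable
      (((hGm.comp (measurable_fst.min measurable_const)).mul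
        ((measurable_const.div (hGm.comp (measurable_fst.min measurable_const))).mul
          hg.abs)).aestronglyMeasurable) (Cb := G t * Cb) fun v => ?_
    rcases eq_or_lt_of_le (hGnn (min v.1 t)) with h | h
    · rw [← h]; simp [mul_nonneg (hGnn t) hCb0]
    · rw [abs_of_nonneg (mul_nonneg (hGnn _) (mul_nonneg (div_nonneg (hGnn t) (hGnn _))
        (abs_nonneg _))), ← mul_assoc, mul_div_cancel₀ _ (ne_of_gt h)]
      exact mul_le_mul_of_nonneg_left (hCb v) (hGnn t)
  have hFint : Integrable F ((μ.map V).prod (μ.map C)) :=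
    (integrable_prod_iff hF.aestronglyMeasurable).mpr ⟨ae_of_all _ hsliceint, hnormint⟩
  have heq : (fun ω => (if min (T ω) t ≤ C ω then (1:ℝ) else 0) * G t / G (min (T ω) t)
      * g (T ω, J ω, Z ω)) = fun ω => F (V ω, C ω) := by
    funext ω; simp only [hFdef]; ring
  constructor
  · rw [heq]
    exact (integrable_map_measure hF.aestronglyMeasurable hVC.aemeasurable).mp
      (hmap ▸ hFint)
  · rw [heq]
    calc ∫ ω, F (V ω, C ω) ∂μ
        = ∫ p, F p ∂(μ.map fun ω => (V ω, C ω)) :=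
          (integral_map hVC.aemeasurable hF.aestronglyMeasurable).symm
      _ = ∫ p, F p ∂((μ.map V).prod (μ.map C)) := by rw [hmap]
      _ = ∫ v, ∫ c, F (v, c) ∂(μ.map C) ∂(μ.map V) := integral_prod F hFint
      _ = ∫ v, G t * g v ∂(μ.map V) := by
          refine integral_congr_ae ?_
          filter_upwards [hposV] with v hv
          rw [hslice v, ← mul_assoc, mul_div_cancel₀ _ (ne_of_gt hv)]
      _ = G t * ∫ v, g v ∂(μ.map V) := integral_const_mul _ _
      _ = G t * ∫ ω, g (V ω) ∂μ := by
          rw [integral_map hV.aemeasurable hg.aestronglyMeasurable]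

lemma ipcw_ind {Ω E₁ E₂ : Type*} {m0 : MeasurableSpace Ω} [MeasurableSpace E₁]
    [MeasurableSpace E₂]
    (μ : Measure Ω) [IsProbabilityMeasure μ]
    (C T : Ω → ℝ) (J : Ω → E₁) (Z : Ω → E₂)
    (hC : Measurable C) (hT : Measurable T) (hJ : Measurable J) (hZ : Measurable Z)
    (hindep : IndepFun C (fun ω => (T ω, J ω, Z ω)) μ)
    (G : ℝ → ℝ) (hG : ∀ u : ℝ, G u = (μ {ω | u ≤ C ω}).toReal)
    (t : ℝ)
    (g : ℝ × E₁ × E₂ → ℝ) (hg : Measurable g) (Cb : ℝ) (hCb0 : 0 ≤ Cb)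
    (hCb : ∀ x, |g x| ≤ Cb) :
    Integrable (fun ω => (if t ≤ C ω then (1:ℝ) else 0) * g (T ω, J ω, Z ω)) μ ∧
    ∫ ω, (if t ≤ C ω then (1:ℝ) else 0) * g (T ω, J ω, Z ω) ∂μ
      = G t * ∫ ω, g (T ω, J ω, Z ω) ∂μ := by
  set V : Ω → ℝ × E₁ × E₂ := fun ω => (T ω, J ω, Z ω) with hVdef
  have hV : Measurable V := hT.prodMk (hJ.prodMk hZ)
  set φ : ℝ → ℝ := fun c => if t ≤ c then (1:ℝ) else 0 with hφdef
  have hφ : Measurable φ :=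
    Measurable.ite (measurableSet_le measurable_const measurable_id)
      measurable_const measurable_const
  have hbound : ∀ ω, |(if t ≤ C ω then (1:ℝ) else 0) * g (T ω, J ω, Z ω)| ≤ Cb := by
    intro ω
    split_ifs with h
    · simpa using hCb (T ω, J ω, Z ω)
    · simpa using hCb0
  have hmeas : Measurable (fun ω => (if t ≤ C ω then (1:ℝ) else 0) * g (T ω, J ω, Z ω)) :=
    (hφ.comp hC).mul (hg.comp hV)
  refine ⟨ipcw_bdd_integrable hmeas.aestronglyMeasurable hbound, ?_⟩
  have hind2 : IndepFun (φ ∘ C) (g ∘ V) μ := hindep.comp hφ hg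
  have hmul := hind2.integral_mul_eq_mul_integral (hφ.comp hC).aestronglyMeasurable
    (hg.comp hV).aestronglyMeasurable
  have hφint : ∫ ω, φ (C ω) ∂μ = G t := by
    rw [hG t]; exact ipcw_indicator_integral μ t C hC
  calc ∫ ω, (if t ≤ C ω then (1:ℝ) else 0) * g (T ω, J ω, Z ω) ∂μ
      = ∫ ω, ((φ ∘ C) * (g ∘ V)) ω ∂μ := rfl
    _ = (∫ ω, φ (C ω) ∂μ) * ∫ ω, g (V ω) ∂μ := hmul
    _ = G t * ∫ ω, g (V ω) ∂μ := by rw [hφint]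


/-- The inverse-probability-of-censoring weight `w(t) = 1_{C ≥ min(T,t)} G(t)/G(min(T,t))`
can be replaced, in expectation and conditionally on `Z`, by the censoring-complete
indicator `1_{C ≥ t}`: for every bounded measurable `f`,
`E[w(t) f(T,J,Z)] = E[1_{C ≥ t} f(T,J,Z)] = G(t) E[f(T,J,Z)]` and
`E[w(t) f(T,J,Z) | σ(Z)] = E[1_{C ≥ t} f(T,J,Z) | σ(Z)]` a.s. -/
theorem ipcw_weight_replacement
    {Ω E₁ E₂ : Type*} {m0 : MeasurableSpace Ω} [MeasurableSpace E₁] [MeasurableSpace E₂]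
    (μ : Measure Ω) [IsProbabilityMeasure μ]
    (C T : Ω → ℝ) (J : Ω → E₁) (Z : Ω → E₂)
    (hC : Measurable C) (hT : Measurable T) (hJ : Measurable J) (hZ : Measurable Z)
    (hindep : IndepFun C (fun ω => (T ω, J ω, Z ω)) μ)
    (G : ℝ → ℝ) (hG : ∀ u : ℝ, G u = (μ {ω | u ≤ C ω}).toReal)
    (t : ℝ) (ht : 0 ≤ t)
    (hpos : ∀ᵐ ω ∂μ, 0 < G (min (T ω) t))
    (w : Ω → ℝ)
    (hw : w = fun ω => (if min (T ω) t ≤ C ω then (1:ℝ) else 0) * G t / G (min (T ω) t)) :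
    ∀ f : ℝ × E₁ × E₂ → ℝ, Measurable f → (∃ Cb : ℝ, ∀ x, |f x| ≤ Cb) →
      ((∫ ω, w ω * f (T ω, J ω, Z ω) ∂μ
          = ∫ ω, (if t ≤ C ω then (1:ℝ) else 0) * f (T ω, J ω, Z ω) ∂μ) ∧
       (∫ ω, w ω * f (T ω, J ω, Z ω) ∂μ = G t * ∫ ω, f (T ω, J ω, Z ω) ∂μ) ∧
       (μ[fun ω => w ω * f (T ω, J ω, Z ω)
            | MeasurableSpace.comap Z inferInstance]
          =ᵐ[μ] μ[fun ω => (if t ≤ C ω then (1:ℝ) else 0) * f (T ω, J ω, Z ω)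
            | MeasurableSpace.comap Z inferInstance])) := by
  intro f hf hb
  obtain ⟨Cb, hCb⟩ := hb
  have hCb' : ∀ x, |f x| ≤ max Cb 0 := fun x => (hCb x).trans (le_max_left _ _)
  have hCb0 : (0:ℝ) ≤ max Cb 0 := le_max_right _ _
  subst hw
  have hcore := ipcw_core μ C T J Z hC hT hJ hZ hindep G hG t hpos f hf _ hCb0 hCb'
  have hind := ipcw_ind μ C T J Z hC hT hJ hZ hindep G hG t f hf _ hCb0 hCb'
  have hwf : (fun ω => (fun ω => (if min (T ω) t ≤ C ω then (1:ℝ) else 0) * G t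
      / G (min (T ω) t)) ω * f (T ω, J ω, Z ω))
      = fun ω => (if min (T ω) t ≤ C ω then (1:ℝ) else 0) * G t
      / G (min (T ω) t) * f (T ω, J ω, Z ω) := rfl
  refine ⟨?_, ?_, ?_⟩
  · rw [hwf, hcore.2, hind.2]
  · rw [hwf, hcore.2]
  · classical
    have hm : MeasurableSpace.comap Z (inferInstance : MeasurableSpace E₂) ≤ m0 :=
      hZ.comap_le
    haveI : IsFiniteMeasure (μ.trim hm) := isFiniteMeasure_trim hm
    have hXint : Integrable (fun ω => (fun ω => (if min (T ω) t ≤ C ω then (1:ℝ) else 0)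
        * G t / G (min (T ω) t)) ω * f (T ω, J ω, Z ω)) μ := hcore.1
    have hYint : Integrable (fun ω => (if t ≤ C ω then (1:ℝ) else 0)
        * f (T ω, J ω, Z ω)) μ := hind.1
    have hsetEq : ∀ s : Set Ω,
        MeasurableSet[MeasurableSpace.comap Z (inferInstance : MeasurableSpace E₂)] s →
        ∫ ω in s, (if min (T ω) t ≤ C ω then (1:ℝ) else 0) * G t / G (min (T ω) t)
          * f (T ω, J ω, Z ω) ∂μ
        = ∫ ω in s, (if t ≤ C ω then (1:ℝ) else 0) * f (T ω, J ω, Z ω) ∂μ := by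
      intro s hs
      obtain ⟨B, hB, rfl⟩ := hs
      have hsB : MeasurableSet[m0] (Z ⁻¹' B) := hZ hB
      set g' : ℝ × E₁ × E₂ → ℝ := fun x => f x * (if x.2.2 ∈ B then 1 else 0) with hg'def
      have hg'm : Measurable g' := by
        refine hf.mul (Measurable.ite ?_ measurable_const measurable_const)
        exact measurable_snd.snd hB
      have hg'b : ∀ x, |g' x| ≤ max Cb 0 := by
        intro x
        simp only [hg'def]
        split_ifs
        · simpa using hCb' x
        · simpa using hCb0
      have hcore' := ipcw_core μ C T J Z hC hT hJ hZ hindep G hG t hpos g' hg'm _ hCb0 hg'b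
      have hind' := ipcw_ind μ C T J Z hC hT hJ hZ hindep G hG t g' hg'm _ hCb0 hg'b
      have e1 : ∫ ω in Z ⁻¹' B, (if min (T ω) t ≤ C ω then (1:ℝ) else 0) * G t
          / G (min (T ω) t) * f (T ω, J ω, Z ω) ∂μ
          = ∫ ω, (if min (T ω) t ≤ C ω then (1:ℝ) else 0) * G t / G (min (T ω) t)
          * g' (T ω, J ω, Z ω) ∂μ := by
        rw [← integral_indicator hsB]
        refine integral_congr_ae (Filter.Eventually.of_forall fun ω => ?_)
        by_cases h : Z ω ∈ B
        · simp [Set.indicator_apply, h, hg'def]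
        · simp [Set.indicator_apply, h, hg'def]
      have e2 : ∫ ω in Z ⁻¹' B, (if t ≤ C ω then (1:ℝ) else 0) * f (T ω, J ω, Z ω) ∂μ
          = ∫ ω, (if t ≤ C ω then (1:ℝ) else 0) * g' (T ω, J ω, Z ω) ∂μ := by
        rw [← integral_indicator hsB]
        refine integral_congr_ae (Filter.Eventually.of_forall fun ω => ?_)
        by_cases h : Z ω ∈ B
        · simp [Set.indicator_apply, h, hg'def]
        · simp [Set.indicator_apply, h, hg'def]
      rw [e1, e2, hcore'.2, hind'.2]
    refine ae_eq_condExp_of_forall_setIntegral_eq hm hYint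
      (fun s hs hμs => integrable_condExp.integrableOn)
      (fun s hs hμs => ?_)
      (StronglyMeasurable.aestronglyMeasurable stronglyMeasurable_condExp)
    rw [setIntegral_condExp hm hXint hs]
    exact hsetEq s hs
end
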